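/- arXiv:1704.07254 — 7 statements merged into one kernel-verified Lean document; each statement's English description precedes it below -/
import Mathlib

section
/- A ranked tree t is a Union tree if and only if every node x of t satisfies the Union condition: the set of ranks of the children of x equals {0, 1, ..., rank(x) − 1}. -/
open scoped Classical

/-- The raw data of a ranked tree: a node set `V`, a root, a parent map
(with `parent root = root` by convention) and a rank function. -/
structure PreTree (V : Type) where
  root : V
  parent : V → V
  rank : V → ℕ

namespace PreTree

variable {V W : Type}

/-- `Anc t x y` : `x` is a (weak) ancestor of `y` in `t`, i.e. `x = parent^[k] y`. -/
def Anc (t : PreTree V) (x y : V) : Prop := ∃ k : ℕ, t.parent^[k] y = x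

/-- `t` is a tree: the parent map fixes the root and every node reaches the root. -/
def IsTree (t : PreTree V) : Prop :=
  t.parent t.root = t.root ∧ ∀ x, t.Anc t.root x

/-- The rank strictly decreases from parent to child. -/
def RankDec (t : PreTree V) : Prop :=
  ∀ x, x ≠ t.root → t.rank x < t.rank (t.parent x)

/-- A ranked tree: a tree whose rank function strictly decreases towards the leaves. -/
def IsRanked (t : PreTree V) : Prop := t.IsTree ∧ t.RankDec

/-- `push t x y` : reattach `x` as a child of `y`, everything else unchanged. -/
noncomputable def push (t : PreTree V) (x y : V) : PreTree V :=
  ⟨t.root, Function.update t.parent x y, t.rank⟩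

/-- `x` and `y` are (distinct, non-root) siblings in `t`. -/
def Siblings (t : PreTree V) (x y : V) : Prop :=
  x ≠ y ∧ x ≠ t.root ∧ y ≠ t.root ∧ t.parent x = t.parent y

/-- One push step: `t ⊢ t'`. -/
def PushStep (t t' : PreTree V) : Prop :=
  ∃ x y, t.Siblings x y ∧ t.rank x < t.rank y ∧ t' = t.push x y

/-- Merge of two trees on disjoint node sets: attach `root s` below `root t`,
incrementing the rank of `root t` exactly when the two root ranks are equal. -/
noncomputable def merge (t : PreTree V) (s : PreTree W) : PreTree (V ⊕ W) where
  root := Sum.inl t.root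
  parent := fun z => match z with
    | Sum.inl v => Sum.inl (t.parent v)
    | Sum.inr w => if w = s.root then Sum.inl t.root else Sum.inr (s.parent w)
  rank := fun z => match z with
    | Sum.inl v =>
        if v = t.root ∧ t.rank t.root = s.rank s.root then t.rank v + 1 else t.rank v
    | Sum.inr w => s.rank w

/-- Collapse: reattach every non-root (weak) ancestor of `x` directly to the root. -/
noncomputable def collapse (t : PreTree V) (x : V) : PreTree V where
  root := t.root
  parent := fun y => if y ≠ t.root ∧ t.Anc y x then t.root else t.parent y
  rank := t.rank

/-- `s ⪯ t` : every ancestor relation of `s` also holds in `t`. -/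
def Le (s t : PreTree V) : Prop := ∀ x y, s.Anc x y → t.Anc x y

/-- Isomorphism of (pre)trees: a bijection preserving root, parent and rank. -/
structure Iso (t : PreTree V) (s : PreTree W) where
  toEquiv : V ≃ W
  map_root : toEquiv t.root = s.root
  map_parent : ∀ x, toEquiv (t.parent x) = s.parent (toEquiv x)
  map_rank : ∀ x, s.rank (toEquiv x) = t.rank x

theorem anc_parent_of_ne {t : PreTree V} {x y : V} (h : t.Anc x y) (hne : y ≠ x) :
    t.Anc x (t.parent y) := by
  obtain ⟨k, hk⟩ := h
  cases k with
  | zero => exact absurd hk hne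
  | succ n => exact ⟨n, by rw [← hk, Function.iterate_succ_apply]⟩

/-- The subtree of `t` rooted at `x`, on the node set of (weak) descendants of `x`. -/
noncomputable def subtree (t : PreTree V) (x : V) : PreTree {y : V // t.Anc x y} where
  root := ⟨x, ⟨0, rfl⟩⟩
  rank := fun y => t.rank y
  parent := fun y =>
    if h : (y : V) = x then ⟨x, ⟨0, rfl⟩⟩ else ⟨t.parent y, anc_parent_of_ne y.2 h⟩

/-- `DepthIs t x k` : the depth of `x` in `t` is exactly `k`. -/
def DepthIs (t : PreTree V) (x : V) (k : ℕ) : Prop :=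
  t.parent^[k] x = t.root ∧ ∀ j < k, t.parent^[j] x ≠ t.root

end PreTree

open PreTree

/-- Union trees: least class (up to isomorphism) containing singletons and closed
under `merge` of trees whose root ranks satisfy `rank t ≥ rank s`. -/
inductive IsUnion : {V : Type} → PreTree V → Prop
  | singleton {V : Type} (t : PreTree V)
      (h1 : ∀ x, x = t.root) (h2 : t.rank t.root = 0) : IsUnion t
  | merge {V W : Type} (t : PreTree V) (s : PreTree W)
      (ht : IsUnion t) (hs : IsUnion s) (hr : s.rank s.root ≤ t.rank t.root) :
      IsUnion (t.merge s)
  | iso {V W : Type} (t : PreTree V) (s : PreTree W)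
      (ht : IsUnion t) (hi : Nonempty (t.Iso s)) : IsUnion s

/-- Union-Find trees: least class (up to isomorphism) containing singletons and
closed under `merge` (with `rank t ≥ rank s`) and `collapse`. -/
inductive IsUnionFind : {V : Type} → PreTree V → Prop
  | singleton {V : Type} (t : PreTree V)
      (h1 : ∀ x, x = t.root) (h2 : t.rank t.root = 0) : IsUnionFind t
  | merge {V W : Type} (t : PreTree V) (s : PreTree W)
      (ht : IsUnionFind t) (hs : IsUnionFind s) (hr : s.rank s.root ≤ t.rank t.root) :
      IsUnionFind (t.merge s)
  | collapse {V : Type} (t : PreTree V) (x : V) (ht : IsUnionFind t) :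
      IsUnionFind (t.collapse x)
  | iso {V W : Type} (t : PreTree V) (s : PreTree W)
      (ht : IsUnionFind t) (hi : Nonempty (t.Iso s)) : IsUnionFind s

section Auxiliary

open PreTree

variable {V W : Type}

/-- The Union condition: at each node, the set of children ranks is an initial segment. -/
def UnionCond (t : PreTree V) : Prop :=
  ∀ x r, (∃ y, y ≠ t.root ∧ t.parent y = x ∧ t.rank y = r) ↔ r < t.rank x

@[simp] lemma merge_root' (t : PreTree V) (s : PreTree W) :
    (t.merge s).root = Sum.inl t.root := rfl

lemma merge_parent_inl (t : PreTree V) (s : PreTree W) (v : V) :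
    (t.merge s).parent (Sum.inl v) = Sum.inl (t.parent v) := rfl

lemma merge_parent_inr (t : PreTree V) (s : PreTree W) (w : W) :
    (t.merge s).parent (Sum.inr w) =
      if w = s.root then Sum.inl t.root else Sum.inr (s.parent w) := rfl

lemma merge_rank_inl (t : PreTree V) (s : PreTree W) (v : V) :
    (t.merge s).rank (Sum.inl v) =
      if v = t.root ∧ t.rank t.root = s.rank s.root then t.rank v + 1 else t.rank v := rfl

lemma merge_rank_inr (t : PreTree V) (s : PreTree W) (w : W) :
    (t.merge s).rank (Sum.inr w) = s.rank w := rfl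

lemma iso_symm_parent {t : PreTree V} {s : PreTree W} (i : t.Iso s) (y : W) :
    t.parent (i.toEquiv.symm y) = i.toEquiv.symm (s.parent y) := by
  apply i.toEquiv.injective
  rw [i.map_parent, Equiv.apply_symm_apply, Equiv.apply_symm_apply]

lemma unionCond_iso {t : PreTree V} {s : PreTree W} (i : t.Iso s) (h : UnionCond t) :
    UnionCond s := by
  intro x r
  have hrk : s.rank x = t.rank (i.toEquiv.symm x) := by
    conv_lhs => rw [← Equiv.apply_symm_apply i.toEquiv x]
    exact i.map_rank _
  rw [hrk, ← h (i.toEquiv.symm x) r]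
  constructor
  · rintro ⟨y, h1, h2, h3⟩
    refine ⟨i.toEquiv.symm y, ?_, ?_, ?_⟩
    · intro hy; apply h1; rw [← i.map_root, ← hy, Equiv.apply_symm_apply]
    · rw [iso_symm_parent i, h2]
    · rw [← h3]
      conv_rhs => rw [← Equiv.apply_symm_apply i.toEquiv y]
      exact (i.map_rank _).symm
  · rintro ⟨y, h1, h2, h3⟩
    refine ⟨i.toEquiv y, ?_, ?_, ?_⟩
    · intro hy; apply h1
      apply i.toEquiv.injective; rw [hy, i.map_root]
    · rw [← i.map_parent, h2, Equiv.apply_symm_apply]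
    · rw [i.map_rank, h3]

lemma singleton_cond {t : PreTree V} (h1 : ∀ x, x = t.root) (h2 : t.rank t.root = 0) :
    UnionCond t := by
  intro x r
  rw [h1 x, h2]
  constructor
  · rintro ⟨y, hy, -, -⟩; exact absurd (h1 y) hy
  · intro h; exact absurd h (Nat.not_lt_zero r)

lemma merge_cond {t : PreTree V} {s : PreTree W} (hct : UnionCond t) (hcs : UnionCond s)
    (hr : s.rank s.root ≤ t.rank t.root) : UnionCond (t.merge s) := by
  intro x r
  cases x with
  | inl v =>
    by_cases hv : v = t.root
    · subst hv
      have lhs_iff : (∃ y, y ≠ (t.merge s).root ∧ (t.merge s).parent y = Sum.inl t.root ∧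
            (t.merge s).rank y = r)
          ↔ ((∃ w, w ≠ t.root ∧ t.parent w = t.root ∧ t.rank w = r) ∨ r = s.rank s.root) := by
        constructor
        · rintro ⟨y, h1, h2, h3⟩
          cases y with
          | inl w =>
            have hw : w ≠ t.root := by
              intro h; subst h; exact h1 rfl
            left
            rw [merge_parent_inl] at h2
            rw [merge_rank_inl, if_neg (by simp [hw])] at h3
            exact ⟨w, hw, Sum.inl.inj h2, h3⟩
          | inr w =>
            right
            rw [merge_parent_inr] at h2
            rw [merge_rank_inr] at h3
            by_cases hw : w = s.root
            · subst hw; rw [← h3]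
            · rw [if_neg hw] at h2; exact absurd h2 (by simp)
        · rintro (⟨w, h1, h2, h3⟩ | h)
          · refine ⟨Sum.inl w, by simp [h1], ?_, ?_⟩
            · rw [merge_parent_inl, h2]
            · rw [merge_rank_inl, if_neg (by simp [h1]), h3]
          · refine ⟨Sum.inr s.root, by simp, ?_, ?_⟩
            · rw [merge_parent_inr, if_pos rfl]
            · rw [merge_rank_inr, h]
      rw [lhs_iff, hct t.root r, merge_rank_inl]
      by_cases he : t.rank t.root = s.rank s.root
      · rw [if_pos ⟨rfl, he⟩]; omega
      · rw [if_neg (by simp [he])]; omega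
    · rw [merge_rank_inl, if_neg (by simp [hv]), ← hct v r]
      constructor
      · rintro ⟨y, h1, h2, h3⟩
        cases y with
        | inl w =>
          have hw : w ≠ t.root := by
            intro h; subst h; exact h1 (by simp)
          rw [merge_parent_inl] at h2
          rw [merge_rank_inl, if_neg (by simp [hw])] at h3
          exact ⟨w, hw, Sum.inl.inj h2, h3⟩
        | inr w =>
          rw [merge_parent_inr] at h2
          by_cases hw : w = s.root
          · rw [if_pos hw] at h2
            exact absurd (Sum.inl.inj h2) (Ne.symm hv)
          · rw [if_neg hw] at h2; exact absurd h2 (by simp)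
      · rintro ⟨w, h1, h2, h3⟩
        refine ⟨Sum.inl w, by simp [h1], ?_, ?_⟩
        · rw [merge_parent_inl, h2]
        · rw [merge_rank_inl, if_neg (by simp [h1]), h3]
  | inr w =>
    rw [merge_rank_inr, ← hcs w r]
    constructor
    · rintro ⟨y, h1, h2, h3⟩
      cases y with
      | inl v' => rw [merge_parent_inl] at h2; exact absurd h2 (by simp)
      | inr w' =>
        rw [merge_parent_inr] at h2
        rw [merge_rank_inr] at h3
        by_cases hw' : w' = s.root
        · rw [if_pos hw'] at h2; exact absurd h2 (by simp)
        · rw [if_neg hw'] at h2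
          exact ⟨w', hw', Sum.inr.inj h2, h3⟩
    · rintro ⟨w', h1, h2, h3⟩
      refine ⟨Sum.inr w', by simp, ?_, ?_⟩
      · rw [merge_parent_inr, if_neg h1, h2]
      · rw [merge_rank_inr, h3]

lemma isUnion_unionCond {V : Type} {t : PreTree V} (h : IsUnion t) : UnionCond t := by
  induction h with
  | singleton t h1 h2 => exact singleton_cond h1 h2
  | merge t s ht hs hr iht ihs => exact merge_cond iht ihs hr
  | iso t s ht hi iht => exact unionCond_iso hi.some iht

/-! ### Backward direction -/

lemma root_iterate {t : PreTree V} (h : t.IsTree) (k : ℕ) :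
    t.parent^[k] t.root = t.root :=
  Function.iterate_fixed h.1 k

lemma anc_refl (t : PreTree V) (x : V) : t.Anc x x := ⟨0, rfl⟩

lemma not_anc_root {t : PreTree V} (h : t.IsTree) {c : V} (hc : c ≠ t.root) :
    ¬ t.Anc c t.root := by
  rintro ⟨k, hk⟩
  rw [root_iterate h] at hk
  exact hc hk.symm

lemma anc_of_parent' (t : PreTree V) {c y : V} (h : t.Anc c (t.parent y)) : t.Anc c y := by
  obtain ⟨k, hk⟩ := h
  exact ⟨k + 1, by rw [Function.iterate_succ_apply]; exact hk⟩

lemma anc_child {t : PreTree V} {c x y : V} (h : t.Anc c x) (hp : t.parent y = x) :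
    t.Anc c y := anc_of_parent' t (by rw [hp]; exact h)

lemma anc_ne_root {t : PreTree V} (htr : t.IsTree) {c y : V} (hc : c ≠ t.root)
    (h : t.Anc c y) : y ≠ t.root := fun hy => not_anc_root htr hc (hy ▸ h)

lemma child_root_not_anc {t : PreTree V} (htr : t.IsTree) {c y : V} (hc : c ≠ t.root)
    (hyc : y ≠ c) (hy : t.parent y = t.root) : ¬ t.Anc c y := by
  rintro ⟨k, hk⟩
  cases k with
  | zero => exact hyc hk
  | succ n =>
    rw [Function.iterate_succ_apply, hy, root_iterate htr] at hk
    exact hc hk.symm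

lemma child_not_anc {t : PreTree V} {c x y : V} (hc2 : t.parent c = t.root)
    (hx : x ≠ t.root) (hxa : ¬ t.Anc c x) (hy : t.parent y = x) : ¬ t.Anc c y := by
  rintro ⟨k, hk⟩
  cases k with
  | zero =>
    apply hx
    rw [← hy, show y = c from hk]
    exact hc2
  | succ n =>
    exact hxa ⟨n, by rw [Function.iterate_succ_apply, hy] at hk; exact hk⟩

/-! ### Subtree lemmas -/

lemma subtree_reach {t : PreTree V} {c : V} :
    ∀ k (y : {y // t.Anc c y}), t.parent^[k] (y : V) = c →
      (t.subtree c).Anc (t.subtree c).root y := by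
  intro k
  induction k with
  | zero =>
    intro y hy
    exact ⟨0, by apply Subtype.ext; exact hy⟩
  | succ n ih =>
    intro y hy
    by_cases h0 : (y : V) = c
    · exact ⟨0, by apply Subtype.ext; exact h0⟩
    · have hp : (t.subtree c).parent y = ⟨t.parent y, anc_parent_of_ne y.2 h0⟩ := dif_neg h0
      have hy' : t.parent^[n] (t.parent (y : V)) = c := by
        rw [← Function.iterate_succ_apply]; exact hy
      obtain ⟨m, hm⟩ := ih ⟨t.parent (y : V), anc_parent_of_ne y.2 h0⟩ hy'
      exact ⟨m + 1, by rw [Function.iterate_succ_apply, hp]; exact hm⟩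

lemma subtree_isRanked {t : PreTree V} (h : t.IsRanked) {c : V} (hc : c ≠ t.root) :
    (t.subtree c).IsRanked := by
  refine ⟨⟨?_, ?_⟩, ?_⟩
  · exact dif_pos rfl
  · intro y
    obtain ⟨k, hk⟩ := y.2
    exact subtree_reach k y hk
  · intro y hy
    have hyc : (y : V) ≠ c := fun h' => hy (Subtype.ext h')
    have hyr : (y : V) ≠ t.root := anc_ne_root h.1 hc y.2
    show (t.subtree c).rank y < (t.subtree c).rank ((t.subtree c).parent y)
    rw [show (t.subtree c).parent y = ⟨t.parent y, anc_parent_of_ne y.2 hyc⟩ from dif_neg hyc]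
    exact h.2 y hyr

lemma subtree_cond {t : PreTree V} (htr : t.IsTree) (hcond : UnionCond t) {c : V}
    (hc : c ≠ t.root) (hc2 : t.parent c = t.root) : UnionCond (t.subtree c) := by
  intro x r
  constructor
  · rintro ⟨y, h1, h2, h3⟩
    have hyc : (y : V) ≠ c := fun h' => h1 (Subtype.ext h')
    rw [show (t.subtree c).parent y = ⟨t.parent y, anc_parent_of_ne y.2 hyc⟩
        from dif_neg hyc] at h2
    exact (hcond (x : V) r).mp
      ⟨(y : V), anc_ne_root htr hc y.2, congrArg Subtype.val h2, h3⟩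
  · intro hr
    obtain ⟨y, h1, h2, h3⟩ := (hcond (x : V) r).mpr hr
    have hay : t.Anc c y := anc_child x.2 h2
    have hyc : y ≠ c := by
      intro h'; subst h'
      apply not_anc_root htr hc
      rw [← show (x:V) = t.root from by rw [← h2, hc2]]
      exact x.2
    refine ⟨⟨y, hay⟩, fun h' => hyc (congrArg Subtype.val h'), ?_, h3⟩
    show dite _ _ _ = x
    rw [dif_neg hyc]
    exact Subtype.ext h2

/-! ### Complement tree -/

/-- Complement of the subtree at `c`, with the rank of the root changed to `r'`. -/
noncomputable def PreTree.cotree (t : PreTree V) (c : V) (r' : ℕ)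
    (h1 : ¬ t.Anc c t.root) : PreTree {y : V // ¬ t.Anc c y} where
  root := ⟨t.root, h1⟩
  parent := fun y => ⟨t.parent y, fun h => y.2 (anc_of_parent' t h)⟩
  rank := fun y => if (y : V) = t.root then r' else t.rank y

lemma cotree_iterate {t : PreTree V} {c : V} {r' : ℕ} {h1 : ¬ t.Anc c t.root} :
    ∀ k (y : {y // ¬ t.Anc c y}),
      (((t.cotree c r' h1).parent^[k] y : V)) = t.parent^[k] (y : V) := by
  intro k
  induction k with
  | zero => intro y; rfl
  | succ n ih =>
    intro y
    rw [Function.iterate_succ_apply, Function.iterate_succ_apply]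
    exact ih _

lemma cotree_isRanked {t : PreTree V} (h : t.IsRanked) {c : V}
    {r' : ℕ} (h1 : ¬ t.Anc c t.root)
    (hlt : ∀ y, y ≠ t.root → y ≠ c → t.parent y = t.root → t.rank y < r') :
    (t.cotree c r' h1).IsRanked := by
  refine ⟨⟨?_, ?_⟩, ?_⟩
  · exact Subtype.ext h.1.1
  · intro y
    obtain ⟨k, hk⟩ := h.1.2 (y : V)
    exact ⟨k, Subtype.ext (by rw [cotree_iterate]; exact hk)⟩
  · intro y hy
    have hyr : (y : V) ≠ t.root := fun h' => hy (Subtype.ext h')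
    show (if ((y : V)) = t.root then r' else t.rank y) <
      (if (t.parent (y : V)) = t.root then r' else t.rank (t.parent (y : V)))
    rw [if_neg hyr]
    by_cases hp : t.parent (y : V) = t.root
    · rw [if_pos hp]
      have hyc : (y : V) ≠ c := fun h' => y.2 (by rw [h']; exact anc_refl t c)
      exact hlt y hyr hyc hp
    · rw [if_neg hp]
      exact h.2 y hyr

lemma cotree_cond {t : PreTree V} (htr : t.IsTree) (hcond : UnionCond t) {c : V}
    (hc : c ≠ t.root) (hc2 : t.parent c = t.root) {r' : ℕ} (h1 : ¬ t.Anc c t.root)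
    (hlt : ∀ y, y ≠ t.root → y ≠ c → t.parent y = t.root → t.rank y < r')
    (hex : ∀ j, j < r' → ∃ y, y ≠ t.root ∧ y ≠ c ∧ t.parent y = t.root ∧ t.rank y = j) :
    UnionCond (t.cotree c r' h1) := by
  intro x r
  by_cases hx : (x : V) = t.root
  · have hrk : (t.cotree c r' h1).rank x = r' := if_pos hx
    rw [hrk]
    constructor
    · rintro ⟨y, hy1, hy2, hy3⟩
      have hyr : (y : V) ≠ t.root := fun h' => hy1 (Subtype.ext h')
      have hyc : (y : V) ≠ c := fun h' => y.2 (by rw [h']; exact anc_refl t c)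
      have hyp : t.parent (y : V) = t.root := by
        rw [show t.parent (y : V) = ((t.cotree c r' h1).parent y : V) from rfl, hy2, hx]
      rw [show (t.cotree c r' h1).rank y = if ((y:V)) = t.root then r' else t.rank y from rfl,
        if_neg hyr] at hy3
      rw [← hy3]
      exact hlt y hyr hyc hyp
    · intro hr
      obtain ⟨y, h1', h2', h3', h4'⟩ := hex r hr
      have hna : ¬ t.Anc c y := child_root_not_anc htr hc h2' h3'
      refine ⟨⟨y, hna⟩, fun h' => h1' (congrArg Subtype.val h'), ?_, ?_⟩
      · exact Subtype.ext (by rw [show ((t.cotree c r' h1).parent ⟨y, hna⟩ : V) = t.parent y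
          from rfl, h3', hx])
      · rw [show (t.cotree c r' h1).rank ⟨y, hna⟩ = if y = t.root then r' else t.rank y
          from rfl, if_neg h1', h4']
  · have hrk : (t.cotree c r' h1).rank x = t.rank (x : V) := if_neg hx
    rw [hrk, ← hcond (x : V) r]
    constructor
    · rintro ⟨y, hy1, hy2, hy3⟩
      have hyr : (y : V) ≠ t.root := fun h' => hy1 (Subtype.ext h')
      have hyp : t.parent (y : V) = (x : V) := by
        rw [show t.parent (y : V) = ((t.cotree c r' h1).parent y : V) from rfl, hy2]
      rw [show (t.cotree c r' h1).rank y = if ((y:V)) = t.root then r' else t.rank y from rfl,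
        if_neg hyr] at hy3
      exact ⟨(y : V), hyr, hyp, hy3⟩
    · rintro ⟨y, h1', h2', h3'⟩
      have hna : ¬ t.Anc c y := child_not_anc hc2 hx x.2 h2'
      refine ⟨⟨y, hna⟩, fun h' => h1' (congrArg Subtype.val h'), ?_, ?_⟩
      · exact Subtype.ext (by rw [show ((t.cotree c r' h1).parent ⟨y, hna⟩ : V) = t.parent y
          from rfl, h2'])
      · rw [show (t.cotree c r' h1).rank ⟨y, hna⟩ = if y = t.root then r' else t.rank y
          from rfl, if_neg h1', h3']

/-! ### The decomposition isomorphism -/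

noncomputable def mergeCotreeIso {t : PreTree V} {c : V} (htr : t.IsTree) (hc : c ≠ t.root)
    (hc2 : t.parent c = t.root) {r' : ℕ} (h1 : ¬ t.Anc c t.root)
    (hrk : (if r' = t.rank c then r' + 1 else r') = t.rank t.root) :
    ((t.cotree c r' h1).merge (t.subtree c)).Iso t where
  toEquiv :=
    { toFun := Sum.elim (fun y => (y : V)) (fun y => (y : V))
      invFun := fun v => if h : t.Anc c v then Sum.inr ⟨v, h⟩ else Sum.inl ⟨v, h⟩
      left_inv := by
        rintro (y | y)
        · simp [y.2]
        · simp [y.2]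
      right_inv := by
        intro v
        by_cases h : t.Anc c v <;> simp [h]
    }
  map_root := rfl
  map_parent := by
    rintro (y | y)
    · rfl
    · show Sum.elim _ _ ((t.cotree c r' h1).merge (t.subtree c) |>.parent (Sum.inr y)) =
        t.parent (y : V)
      rw [merge_parent_inr]
      by_cases hy : y = (t.subtree c).root
      · rw [if_pos hy]
        have hyc : (y : V) = c := congrArg Subtype.val hy
        show (t.root : V) = t.parent (y : V)
        rw [hyc, hc2]
      · rw [if_neg hy]
        have hyc : (y : V) ≠ c := fun h' => hy (Subtype.ext h')
        show ((t.subtree c).parent y : V) = t.parent (y : V)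
        rw [show (t.subtree c).parent y = ⟨t.parent y, anc_parent_of_ne y.2 hyc⟩
          from dif_neg hyc]
  map_rank := by
    rintro (y | y)
    · show t.rank (y : V) = ((t.cotree c r' h1).merge (t.subtree c)).rank (Sum.inl y)
      rw [merge_rank_inl]
      have e1 : (t.cotree c r' h1).rank (t.cotree c r' h1).root = r' := if_pos rfl
      have e2 : (t.subtree c).rank (t.subtree c).root = t.rank c := rfl
      by_cases hy : (y : V) = t.root
      · have hy' : y = (t.cotree c r' h1).root := Subtype.ext hy
        have e3 : (t.cotree c r' h1).rank y = r' := if_pos hy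
        rw [hy]
        simp only [e1, e2, e3, hy', eq_self_iff_true, true_and]
        exact hrk.symm
      · have hy' : y ≠ (t.cotree c r' h1).root := fun h' => hy (congrArg Subtype.val h')
        rw [if_neg (by rintro ⟨h, -⟩; exact hy' h)]
        rw [show (t.cotree c r' h1).rank y = if ((y:V)) = t.root then r' else t.rank y
          from rfl, if_neg hy]
    · rfl

/-! ### Backward induction -/

lemma isUnion_of_cond : ∀ (n : ℕ) (V : Type) [Fintype V] (t : PreTree V),
    Fintype.card V ≤ n → t.IsRanked → UnionCond t → IsUnion t := by
  intro n
  induction n with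
  | zero =>
    intro V _ t hcard _ _
    have : IsEmpty V := Fintype.card_eq_zero_iff.mp (Nat.le_zero.mp hcard)
    exact this.elim t.root
  | succ n ih =>
    intro V _ t hcard hrank hcond
    by_cases hall : ∀ x, x = t.root
    · refine IsUnion.singleton t hall ?_
      by_contra h0
      obtain ⟨y, hy, -, -⟩ := (hcond t.root (t.rank t.root - 1)).mpr (by omega)
      exact hy (hall y)
    · push_neg at hall
      obtain ⟨x₀, hx₀⟩ := hall
      obtain ⟨k, hk⟩ := hrank.1.2 x₀
      have hne : ∃ k, t.parent^[k] x₀ = t.root := ⟨k, hk⟩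
      have hk₀ : t.parent^[Nat.find hne] x₀ = t.root := Nat.find_spec hne
      have hk₀pos : Nat.find hne ≠ 0 := by
        intro h; rw [h] at hk₀; exact hx₀ hk₀
      have hy₀root : t.parent (t.parent^[Nat.find hne - 1] x₀) = t.root := by
        have h' : t.parent^[Nat.find hne - 1 + 1] x₀ = t.root := by
          rw [show Nat.find hne - 1 + 1 = Nat.find hne by omega]
          exact hk₀
        rw [Function.iterate_succ_apply'] at h'
        exact h'
      have hy₀ne : t.parent^[Nat.find hne - 1] x₀ ≠ t.root :=
        Nat.find_min hne (by omega)
      have hrpos : 0 < t.rank t.root := by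
        have := (hcond t.root (t.rank (t.parent^[Nat.find hne - 1] x₀))).mp
          ⟨_, hy₀ne, hy₀root, rfl⟩
        omega
      obtain ⟨c, hc1, hc2, hc3⟩ := (hcond t.root (t.rank t.root - 1)).mpr (by omega)
      have hnar : ¬ t.Anc c t.root := not_anc_root hrank.1 hc1
      have hcardD : Fintype.card {y // t.Anc c y} ≤ n := by
        have h' : Fintype.card {y // t.Anc c y} < Fintype.card V :=
          Fintype.card_subtype_lt hnar
        omega
      have hcardC : Fintype.card {y // ¬ t.Anc c y} ≤ n := by
        have h' : Fintype.card {y // ¬ t.Anc c y} < Fintype.card V :=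
          Fintype.card_subtype_lt (not_not_intro (anc_refl t c))
        omega
      have hu2 : IsUnion (t.subtree c) :=
        ih _ (t.subtree c) hcardD (subtree_isRanked hrank hc1)
          (subtree_cond hrank.1 hcond hc1 hc2)
      have hchild_lt : ∀ y, y ≠ t.root → t.parent y = t.root → t.rank y < t.rank t.root := by
        intro y h1 h2
        exact (hcond t.root (t.rank y)).mp ⟨y, h1, h2, rfl⟩
      by_cases huniq : ∀ y, y ≠ t.root → y ≠ c → t.parent y = t.root →
          t.rank y ≠ t.rank t.root - 1
      · -- `c` is the unique child of the root of maximal rank; the root rank drops.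
        have hlt : ∀ y, y ≠ t.root → y ≠ c → t.parent y = t.root →
            t.rank y < t.rank t.root - 1 := by
          intro y h1 h2 h3
          have := hchild_lt y h1 h3
          have := huniq y h1 h2 h3
          omega
        have hex : ∀ j, j < t.rank t.root - 1 →
            ∃ y, y ≠ t.root ∧ y ≠ c ∧ t.parent y = t.root ∧ t.rank y = j := by
          intro j hj
          obtain ⟨y, h1, h2, h3⟩ := (hcond t.root j).mpr (by omega)
          refine ⟨y, h1, ?_, h2, h3⟩
          intro h; subst h; omega
        have hu1 : IsUnion (t.cotree c (t.rank t.root - 1) hnar) :=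
          ih _ _ hcardC (cotree_isRanked hrank hnar hlt)
            (cotree_cond hrank.1 hcond hc1 hc2 hnar hlt hex)
        have hrle : (t.subtree c).rank (t.subtree c).root ≤
            (t.cotree c (t.rank t.root - 1) hnar).rank
              (t.cotree c (t.rank t.root - 1) hnar).root := by
          show t.rank c ≤ if (t.root : V) = t.root then t.rank t.root - 1 else t.rank t.root
          rw [if_pos rfl, hc3]
        refine IsUnion.iso _ _ (IsUnion.merge _ _ hu1 hu2 hrle)
          ⟨mergeCotreeIso hrank.1 hc1 hc2 hnar ?_⟩
        rw [hc3, if_pos rfl]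
        omega
      · -- the root has another child of rank `r - 1`; the root rank is unchanged.
        push_neg at huniq
        obtain ⟨c', hc'1, hc'2, hc'3, hc'4⟩ := huniq
        have hlt : ∀ y, y ≠ t.root → y ≠ c → t.parent y = t.root →
            t.rank y < t.rank t.root := fun y h1 _ h3 => hchild_lt y h1 h3
        have hex : ∀ j, j < t.rank t.root →
            ∃ y, y ≠ t.root ∧ y ≠ c ∧ t.parent y = t.root ∧ t.rank y = j := by
          intro j hj
          by_cases hj' : j = t.rank t.root - 1
          · exact ⟨c', hc'1, hc'2, hc'3, by rw [hc'4, hj']⟩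
          · obtain ⟨y, h1, h2, h3⟩ := (hcond t.root j).mpr hj
            refine ⟨y, h1, ?_, h2, h3⟩
            intro h; subst h; omega
        have hu1 : IsUnion (t.cotree c (t.rank t.root) hnar) :=
          ih _ _ hcardC (cotree_isRanked hrank hnar hlt)
            (cotree_cond hrank.1 hcond hc1 hc2 hnar hlt hex)
        have hrle : (t.subtree c).rank (t.subtree c).root ≤
            (t.cotree c (t.rank t.root) hnar).rank
              (t.cotree c (t.rank t.root) hnar).root := by
          show t.rank c ≤ if (t.root : V) = t.root then t.rank t.root else t.rank t.root
          rw [if_pos rfl, hc3]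
          omega
        refine IsUnion.iso _ _ (IsUnion.merge _ _ hu1 hu2 hrle)
          ⟨mergeCotreeIso hrank.1 hc1 hc2 hnar ?_⟩
        rw [hc3, if_neg (by omega)]

end Auxiliary

/-- Cai: a ranked tree is a Union tree iff every node satisfies the
Union condition: the set of ranks of its children is `{0, 1, …, rank x − 1}`. -/
theorem isUnion_iff_unionCond {V : Type} [Fintype V] (t : PreTree V) (ht : t.IsRanked) :
    IsUnion t ↔
      ∀ x r, (∃ y, y ≠ t.root ∧ t.parent y = x ∧ t.rank y = r) ↔ r < t.rank x := by
  constructor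
  · exact fun h => isUnion_unionCond h
  · intro h
    exact isUnion_of_cond (Fintype.card V) V t le_rfl ht h
end

section
/- The rank of the root of a Union tree equals the height of the tree, and the nodes of rank 0 are exactly the leaves. -/
open scoped Classical

open PreTree

section Aux

open PreTree

variable {V W : Type}

lemma iterate_merge_inl (t : PreTree V) (s : PreTree W) (v : V) (k : ℕ) :
    (t.merge s).parent^[k] (Sum.inl v) = Sum.inl (t.parent^[k] v) := by
  induction k with
  | zero => rfl
  | succ n ih =>
      rw [Function.iterate_succ_apply', ih, Function.iterate_succ_apply']
      rfl

lemma iterate_merge_inr (t : PreTree V) (s : PreTree W) (w : W) (k : ℕ)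
    (h : ∀ j < k, s.parent^[j] w ≠ s.root) :
    (t.merge s).parent^[k] (Sum.inr w) = Sum.inr (s.parent^[k] w) := by
  induction k with
  | zero => rfl
  | succ n ih =>
      rw [Function.iterate_succ_apply',
        ih (fun j hj => h j (hj.trans (Nat.lt_succ_self n))),
        Function.iterate_succ_apply']
      simp [PreTree.merge, h n (Nat.lt_succ_self n)]

lemma depthIs_unique {t : PreTree V} {x : V} {k k' : ℕ}
    (h : t.DepthIs x k) (h' : t.DepthIs x k') : k = k' := by
  by_contra hne
  rcases Nat.lt_or_ge k k' with hl | hl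
  · exact h'.2 k hl h.1
  · exact h.2 k' (lt_of_le_of_ne hl (Ne.symm hne)) h'.1

lemma iso_iterate {t : PreTree V} {s : PreTree W} (e : t.Iso s) (x : V) (k : ℕ) :
    e.toEquiv (t.parent^[k] x) = s.parent^[k] (e.toEquiv x) := by
  induction k with
  | zero => rfl
  | succ n ih =>
      rw [Function.iterate_succ_apply', Function.iterate_succ_apply', e.map_parent, ih]

lemma iso_depthIs {t : PreTree V} {s : PreTree W} (e : t.Iso s) (x : V) (k : ℕ) :
    s.DepthIs (e.toEquiv x) k ↔ t.DepthIs x k := by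
  have key : ∀ j : ℕ, s.parent^[j] (e.toEquiv x) = s.root ↔ t.parent^[j] x = t.root := by
    intro j
    rw [← iso_iterate e, ← e.map_root]
    exact ⟨fun h => e.toEquiv.injective h, fun h => by rw [h]⟩
  constructor
  · exact fun h => ⟨(key k).1 h.1, fun j hj hc => h.2 j hj ((key j).2 hc)⟩
  · exact fun h => ⟨(key k).2 h.1, fun j hj hc => h.2 j hj ((key j).1 hc)⟩

lemma good_of_isUnion : ∀ {V : Type} (t : PreTree V), IsUnion t →
    ((∀ x k, t.DepthIs x k → k ≤ t.rank t.root) ∧ (∃ x, t.DepthIs x (t.rank t.root))) ∧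
    (∀ x, t.rank x = 0 ↔ ¬∃ y, y ≠ t.root ∧ t.parent y = x) := by
  intro V t hu
  induction hu with
  | singleton t h1 h2 =>
      refine ⟨⟨?_, ?_⟩, ?_⟩
      · intro x k hk
        rcases Nat.eq_zero_or_pos k with h | h
        · omega
        · exact absurd (h1 x) (hk.2 0 h)
      · exact ⟨t.root, by rw [h2]; exact ⟨rfl, by omega⟩⟩
      · intro x
        rw [h1 x, h2]
        exact iff_of_true rfl (by rintro ⟨y, hy, -⟩; exact hy (h1 y))
  | merge t s ht hs hr iht ihs =>
      obtain ⟨⟨htb, htw⟩, htl⟩ := iht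
      obtain ⟨⟨hsb, hsw⟩, hsl⟩ := ihs
      have hroot : (t.merge s).root = Sum.inl t.root := rfl
      have hrk : (t.merge s).rank ((t.merge s).root) =
          if t.rank t.root = s.rank s.root then t.rank t.root + 1 else t.rank t.root := by
        simp [PreTree.merge]
      refine ⟨⟨?_, ?_⟩, ?_⟩
      · -- bound on depths
        rintro (v | w) k hk
        · -- inl case
          have ht' : t.DepthIs v k := by
            refine ⟨?_, ?_⟩
            · have := hk.1
              rw [iterate_merge_inl] at this
              simpa [hroot] using this
            · intro j hj hc
              exact hk.2 j hj (by rw [iterate_merge_inl, hc]; rfl)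
          have := htb v k ht'
          rw [hrk]
          split <;> omega
        · -- inr case
          have hex : ∃ j, j < k ∧ s.parent^[j] w = s.root := by
            by_contra hcon
            push_neg at hcon
            have h1 := hk.1
            rw [iterate_merge_inr t s w k (fun j hj => hcon j hj)] at h1
            exact absurd h1 (by simp [hroot])
          classical
          have hex' : ∃ j, s.parent^[j] w = s.root := ⟨hex.choose, hex.choose_spec.2⟩
          set m := Nat.find hex' with hm
          have hm1 : s.parent^[m] w = s.root := Nat.find_spec hex'
          have hm2 : ∀ j < m, s.parent^[j] w ≠ s.root := fun j hj => Nat.find_min hex' hj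
          have hds : s.DepthIs w m := ⟨hm1, hm2⟩
          have hdm : (t.merge s).DepthIs (Sum.inr w) (m + 1) := by
            refine ⟨?_, ?_⟩
            · rw [Function.iterate_succ_apply',
                iterate_merge_inr t s w m hm2, hm1]
              simp [PreTree.merge]
            · intro j hj hc
              have hj' : j ≤ m := by omega
              rw [iterate_merge_inr t s w j (fun j' hj' => hm2 j' (by omega))] at hc
              exact absurd hc (by simp [hroot])
          have hkm : k = m + 1 := depthIs_unique hk hdm
          have := hsb w m hds
          rw [hrk]
          split <;> omega
      · -- witness for the height
        by_cases heq : t.rank t.root = s.rank s.root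
        · obtain ⟨w, hw⟩ := hsw
          refine ⟨Sum.inr w, ?_⟩
          rw [hrk, if_pos heq]
          refine ⟨?_, ?_⟩
          · rw [heq, Function.iterate_succ_apply',
              iterate_merge_inr t s w _ hw.2, hw.1]
            simp [PreTree.merge]
          · intro j hj hc
            rw [heq] at hj
            have hj' : j ≤ s.rank s.root := by omega
            rw [iterate_merge_inr t s w j (fun j' hj'' => hw.2 j' (by omega))] at hc
            exact absurd hc (by simp [hroot])
        · obtain ⟨v, hv⟩ := htw
          refine ⟨Sum.inl v, ?_⟩
          rw [hrk, if_neg heq]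
          refine ⟨?_, ?_⟩
          · rw [iterate_merge_inl, hv.1]; rfl
          · intro j hj hc
            rw [iterate_merge_inl] at hc
            exact hv.2 j hj (by simpa [hroot] using hc)
      · -- leaves
        rintro (v | w)
        · by_cases hv : v = t.root
          · subst hv
            have hne : (t.merge s).rank (Sum.inl t.root) ≠ 0 := by
              by_cases heq : t.rank t.root = s.rank s.root
              · simp [PreTree.merge, heq]
              · have : s.rank s.root < t.rank t.root := lt_of_le_of_ne hr (fun h => heq h.symm)
                simp [PreTree.merge, heq]
                omega
            have hch : ∃ y, y ≠ (t.merge s).root ∧ (t.merge s).parent y = Sum.inl t.root := by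
              refine ⟨Sum.inr s.root, by simp [hroot], by simp [PreTree.merge]⟩
            exact iff_of_false hne (not_not.mpr hch)
          · have hrv : (t.merge s).rank (Sum.inl v) = t.rank v := by
              simp [PreTree.merge, hv]
            rw [hrv, htl v]
            constructor
            · rintro hno ⟨y, hy, hpy⟩
              rcases y with y | y
              · refine hno ⟨y, ?_, ?_⟩
                · intro h; apply hy; rw [hroot, h]
                · simpa [PreTree.merge] using hpy
              · by_cases hys : y = s.root
                · subst hys
                  simp [PreTree.merge] at hpy
                  exact hv hpy.symm
                · simp [PreTree.merge, hys] at hpy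
            · rintro hno ⟨y, hy, hpy⟩
              exact hno ⟨Sum.inl y, by simp [hroot, hy], by simp [PreTree.merge, hpy]⟩
        · have hrw : (t.merge s).rank (Sum.inr w) = s.rank w := rfl
          rw [hrw, hsl w]
          constructor
          · rintro hno ⟨y, hy, hpy⟩
            rcases y with y | y
            · simp [PreTree.merge] at hpy
            · by_cases hys : y = s.root
              · subst hys; simp [PreTree.merge] at hpy
              · refine hno ⟨y, hys, ?_⟩
                simpa [PreTree.merge, hys] using hpy
          · rintro hno ⟨y, hy, hpy⟩
            refine hno ⟨Sum.inr y, by simp [hroot], by simp [PreTree.merge, hy, hpy]⟩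
  | iso t s ht hi ih =>
      obtain ⟨e⟩ := hi
      obtain ⟨⟨htb, htw⟩, htl⟩ := ih
      have hrr : s.rank s.root = t.rank t.root := by
        rw [← e.map_root, e.map_rank]
      refine ⟨⟨?_, ?_⟩, ?_⟩
      · intro y k hk
        have hy : e.toEquiv (e.toEquiv.symm y) = y := e.toEquiv.apply_symm_apply y
        have : t.DepthIs (e.toEquiv.symm y) k := (iso_depthIs e _ k).1 (by rwa [hy])
        rw [hrr]
        exact htb _ k this
      · obtain ⟨x, hx⟩ := htw
        exact ⟨e.toEquiv x, by rw [hrr]; exact (iso_depthIs e x _).2 hx⟩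
      · intro y
        have h1 : s.rank y = t.rank (e.toEquiv.symm y) := by
          conv_lhs => rw [← e.toEquiv.apply_symm_apply y]
          rw [e.map_rank]
        rw [h1, htl]
        constructor
        · rintro hno ⟨z, hz, hpz⟩
          refine hno ⟨e.toEquiv.symm z, ?_, ?_⟩
          · intro h
            apply hz
            rw [← e.toEquiv.apply_symm_apply z, h, e.map_root]
          · apply e.toEquiv.injective
            rw [e.map_parent, e.toEquiv.apply_symm_apply, e.toEquiv.apply_symm_apply, hpz]
        · rintro hno ⟨z, hz, hpz⟩
          refine hno ⟨e.toEquiv z, ?_, ?_⟩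
          · intro h
            apply hz
            rw [← e.map_root] at h
            exact e.toEquiv.injective h
          · rw [← e.map_parent, hpz, e.toEquiv.apply_symm_apply]

end Aux

/-- the root rank of a Union tree equals its height, and the
rank-0 nodes are exactly the leaves. -/
theorem isUnion_rank_eq_height_and_leaves {V : Type} (t : PreTree V)
    (ht : t.IsRanked) (hu : IsUnion t) :
    ((∀ x k, t.DepthIs x k → k ≤ t.rank t.root) ∧ (∃ x, t.DepthIs x (t.rank t.root))) ∧
    (∀ x, t.rank x = 0 ↔ ¬∃ y, y ≠ t.root ∧ t.parent y = x) :=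
  good_of_isUnion t hu
end

section
/- In any Union-Find tree t, the number of nodes of rank 0 is at least the number of nodes of positive rank. -/
open scoped Classical

open PreTree

open Finset in
private lemma sum_eq_add_erase' {V : Type} [Fintype V] (r : V) (f : V → ℕ) :
    ∑ x, f x = f r + ∑ x ∈ Finset.univ.erase r, f x :=
  (Finset.add_sum_erase _ f (Finset.mem_univ r)).symm

private lemma uf_aux : ∀ {V : Type} (t : PreTree V), IsUnionFind t →
    ∀ [inst : Fintype V],
      (∑ x : V, if 0 < t.rank x then 1 else 0) + (if t.rank t.root = 0 then 1 else 0)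
        ≤ ∑ x : V, if t.rank x = 0 then (1:ℕ) else 0 := by
  intro V t hu
  induction hu with
  | @singleton V t h1 h2 =>
      intro inst
      have hz : ∀ x, t.rank x = 0 := fun x => (h1 x) ▸ h2
      simp only [hz, h2, lt_irrefl, if_false, if_true]
      have : (0:ℕ) < Fintype.card V := Fintype.card_pos_iff.mpr ⟨t.root⟩
      simpa using Nat.succ_le_of_lt this
  | @merge V W t s ht hs hr iht ihs =>
      intro inst
      haveI hV : Fintype V := Fintype.ofInjective (Sum.inl : V → V ⊕ W) Sum.inl_injective
      haveI hW : Fintype W := Fintype.ofInjective (Sum.inr : W → V ⊕ W) Sum.inr_injective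
      have hinst : inst = instFintypeSum V W := Subsingleton.elim _ _
      subst hinst
      rw [Fintype.sum_sum_type, Fintype.sum_sum_type]
      have hs_rank : ∀ w, (t.merge s).rank (Sum.inr w) = s.rank w := fun w => rfl
      simp only [hs_rank]
      by_cases heq : t.rank t.root = s.rank s.root
      · -- equal ranks: root rank incremented
        have hmroot : (t.merge s).rank (t.merge s).root = t.rank t.root + 1 := by
          simp [PreTree.merge, heq]
        rw [sum_eq_add_erase' t.root (fun a => if 0 < (t.merge s).rank (Sum.inl a) then 1 else 0),
            sum_eq_add_erase' t.root (fun a => if (t.merge s).rank (Sum.inl a) = 0 then 1 else 0)]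
        have e1 : (∑ x ∈ Finset.univ.erase t.root,
              (if 0 < (t.merge s).rank (Sum.inl x) then (1:ℕ) else 0))
            = ∑ x ∈ Finset.univ.erase t.root, if 0 < t.rank x then 1 else 0 :=
          Finset.sum_congr rfl fun x hx => by
            simp [PreTree.merge, (Finset.mem_erase.mp hx).1]
        have e2 : (∑ x ∈ Finset.univ.erase t.root,
              (if (t.merge s).rank (Sum.inl x) = 0 then (1:ℕ) else 0))
            = ∑ x ∈ Finset.univ.erase t.root, if t.rank x = 0 then 1 else 0 :=
          Finset.sum_congr rfl fun x hx => by
            simp [PreTree.merge, (Finset.mem_erase.mp hx).1]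
        rw [e1, e2]
        have hA : (if 0 < (t.merge s).rank (Sum.inl t.root) then (1:ℕ) else 0) = 1 := by
          have : (t.merge s).rank (Sum.inl t.root) = t.rank t.root + 1 := hmroot
          simp [this]
        have hB : (if (t.merge s).rank (Sum.inl t.root) = 0 then (1:ℕ) else 0) = 0 := by
          have : (t.merge s).rank (Sum.inl t.root) = t.rank t.root + 1 := hmroot
          simp [this]
        rw [hA, hB, hmroot]
        have IHt := iht (inst := hV)
        have IHs := ihs (inst := hW)
        rw [sum_eq_add_erase' t.root (fun a => if 0 < t.rank a then (1:ℕ) else 0),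
            sum_eq_add_erase' t.root (fun a => if t.rank a = 0 then (1:ℕ) else 0)] at IHt
        rw [← heq] at IHs
        simp only [if_false, Nat.succ_ne_zero, add_zero]
        have key : (if 0 < t.rank t.root then (1:ℕ) else 0)
            + (if t.rank t.root = 0 then (1:ℕ) else 0) = 1 := by
          rcases Nat.eq_zero_or_pos (t.rank t.root) with h | h
          · simp [h]
          · simp [h, Nat.pos_iff_ne_zero.mp h]
        omega
      · -- unequal ranks: nothing changes
        have hrk : ∀ v, (t.merge s).rank (Sum.inl v) = t.rank v := by
          intro v
          show (if v = t.root ∧ t.rank t.root = s.rank s.root then t.rank v + 1 else t.rank v)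
              = t.rank v
          simp [heq]
        simp only [hrk]
        have hmroot : (t.merge s).root = Sum.inl t.root := rfl
        have hpos : 0 < t.rank t.root := lt_of_le_of_lt (Nat.zero_le _) (lt_of_le_of_ne hr (fun h => heq h.symm))
        have hroot0 : (if (t.merge s).rank (t.merge s).root = 0 then (1:ℕ) else 0) = 0 := by
          show (if (t.merge s).rank (Sum.inl t.root) = 0 then (1:ℕ) else 0) = 0
          rw [hrk t.root]
          simp [Nat.pos_iff_ne_zero.mp hpos]
        rw [hroot0]
        have IHt := iht (inst := hV)
        have IHs := ihs (inst := hW)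
        omega
  | @collapse V t x ht ih =>
      intro inst
      exact ih (inst := inst)
  | @iso V W t s ht hi ih =>
      intro instW
      obtain ⟨e⟩ := hi
      haveI instV : Fintype _ := Fintype.ofEquiv _ e.toEquiv.symm
      have h1 : (∑ y, if 0 < s.rank y then (1:ℕ) else 0)
          = ∑ x, if 0 < t.rank x then (1:ℕ) else 0 := by
        rw [← Equiv.sum_comp e.toEquiv (fun y => if 0 < s.rank y then (1:ℕ) else 0)]
        exact Finset.sum_congr rfl fun x _ => by rw [e.map_rank]
      have h2 : (∑ y, if s.rank y = 0 then (1:ℕ) else 0)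
          = ∑ x, if t.rank x = 0 then (1:ℕ) else 0 := by
        rw [← Equiv.sum_comp e.toEquiv (fun y => if s.rank y = 0 then (1:ℕ) else 0)]
        exact Finset.sum_congr rfl fun x _ => by rw [e.map_rank]
      have h3 : s.rank s.root = t.rank t.root := by rw [← e.map_root, e.map_rank]
      rw [h1, h2, h3]
      exact ih (inst := instV)

/-- a Union-Find tree has at least as many rank-0 nodes as
positive-rank nodes. -/
theorem isUnionFind_rank_zero_ge {V : Type} [Fintype V] (t : PreTree V)
    (hu : IsUnionFind t) :
    Fintype.card {x : V // 0 < t.rank x} ≤ Fintype.card {x : V // t.rank x = 0} := by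
  have h := uf_aux t hu
  rw [Fintype.card_subtype, Fintype.card_subtype, Finset.card_filter, Finset.card_filter]
  omega
end

section
/- A ranked tree t is a Union-Find tree if and only if there exists a Union tree s with t ⊢* s, i.e., s is obtainable from t by a finite sequence of push operations. -/
open scoped Classical

open PreTree

section AuxLemmas

namespace PreTree

variable {V W : Type}

theorem Anc.rfl' {t : PreTree V} {x : V} : t.Anc x x := ⟨0, rfl⟩

theorem anc_parent' (t : PreTree V) (x : V) : t.Anc (t.parent x) x := ⟨1, rfl⟩

theorem Anc.trans' {t : PreTree V} {x y z : V} (h1 : t.Anc x y) (h2 : t.Anc y z) :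
    t.Anc x z := by
  obtain ⟨k, hk⟩ := h1
  obtain ⟨j, hj⟩ := h2
  exact ⟨k + j, by rw [Function.iterate_add_apply, hj, hk]⟩

theorem iterate_root {t : PreTree V} (h : t.IsTree) (k : ℕ) :
    t.parent^[k] t.root = t.root := by
  induction k with
  | zero => rfl
  | succ n ih => rw [Function.iterate_succ_apply', ih, h.1]

theorem rank_lt_of_anc {t : PreTree V} (ht : t.IsRanked) : ∀ (k : ℕ) (v : V),
    t.parent^[k] v = v ∨ t.rank v < t.rank (t.parent^[k] v) := by
  intro k
  induction k with
  | zero => intro v; exact Or.inl rfl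
  | succ n ih =>
    intro v
    rw [Function.iterate_succ_apply']
    rcases ih v with h | h
    · rw [h]
      by_cases hv : v = t.root
      · subst hv; exact Or.inl ht.1.1
      · exact Or.inr (ht.2 v hv)
    · by_cases hw : t.parent^[n] v = t.root
      · rw [hw, ht.1.1, ← hw]; exact Or.inr h
      · exact Or.inr (h.trans (ht.2 _ hw))

theorem rank_lt_of_anc' {t : PreTree V} (ht : t.IsRanked) {u v : V} (h : t.Anc u v)
    (hne : u ≠ v) : t.rank v < t.rank u := by
  obtain ⟨k, hk⟩ := h
  rcases rank_lt_of_anc ht k v with h' | h'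
  · exact absurd (hk.symm.trans h') hne
  · rwa [hk] at h'

/-- depth of a node in a tree -/
noncomputable def dep (t : PreTree V) (h : t.IsTree) (x : V) : ℕ :=
  Nat.find (h.2 x)

theorem dep_spec (t : PreTree V) (h : t.IsTree) (x : V) :
    t.parent^[dep t h x] x = t.root := Nat.find_spec (h.2 x)

theorem dep_min (t : PreTree V) (h : t.IsTree) (x : V) {j : ℕ} (hj : j < dep t h x) :
    t.parent^[j] x ≠ t.root := Nat.find_min (h.2 x) hj

theorem dep_eq_zero_iff (t : PreTree V) (h : t.IsTree) (x : V) :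
    dep t h x = 0 ↔ x = t.root := by
  rw [dep]; refine (Nat.find_eq_zero _).trans ?_
  exact Iff.rfl

theorem dep_parent (t : PreTree V) (h : t.IsTree) {x : V} (hx : x ≠ t.root) :
    dep t h x = dep t h (t.parent x) + 1 := by
  have h1 : t.parent^[dep t h (t.parent x) + 1] x = t.root := by
    rw [Function.iterate_succ_apply]; exact dep_spec t h (t.parent x)
  have h2 : dep t h x ≤ dep t h (t.parent x) + 1 := Nat.find_le h1
  have h0 : dep t h x ≠ 0 := fun h0 => hx ((dep_eq_zero_iff t h x).mp h0)
  obtain ⟨m, hm⟩ := Nat.exists_eq_succ_of_ne_zero h0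
  have hs : t.parent^[m] (t.parent x) = t.root := by
    have hsp := dep_spec t h x
    rw [hm, Function.iterate_succ_apply] at hsp
    exact hsp
  have h3 : dep t h (t.parent x) ≤ m := Nat.find_le hs
  omega

theorem dep_lt_of_anc {t : PreTree V} (h : t.IsTree) : ∀ (k : ℕ) (v : V),
    t.parent^[k] v = v ∨ dep t h (t.parent^[k] v) < dep t h v := by
  intro k
  induction k with
  | zero => intro v; exact Or.inl rfl
  | succ n ih =>
    intro v
    rw [Function.iterate_succ_apply']
    rcases ih v with h' | h'
    · rw [h']
      by_cases hv : v = t.root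
      · subst hv; exact Or.inl h.1
      · right; rw [dep_parent t h hv]; omega
    · by_cases hw : t.parent^[n] v = t.root
      · right; rw [hw, h.1, ← hw]; exact h'
      · right; have := dep_parent t h hw; omega

theorem dep_lt_of_anc' {t : PreTree V} (h : t.IsTree) {u v : V} (hanc : t.Anc u v)
    (hne : u ≠ v) : dep t h u < dep t h v := by
  obtain ⟨k, hk⟩ := hanc
  rcases dep_lt_of_anc h k v with h' | h'
  · exact absurd (hk.symm.trans h') hne
  · rwa [hk] at h'

theorem isTree_of_dep_lt {s u : PreTree V} (hs : s.IsTree) (hroot : u.root = s.root)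
    (hfix : u.parent u.root = u.root)
    (hdec : ∀ v, v ≠ u.root → dep s hs (u.parent v) < dep s hs v) : u.IsTree := by
  refine ⟨hfix, fun x => ?_⟩
  have key : ∀ n : ℕ, ∀ x : V, dep s hs x ≤ n → u.Anc u.root x := by
    intro n
    induction n with
    | zero =>
      intro x hx
      by_cases hxr : x = u.root
      · exact ⟨0, hxr⟩
      · exact absurd (lt_of_lt_of_le (hdec x hxr) hx) (Nat.not_lt_zero _)
    | succ n ih =>
      intro x hx
      by_cases hxr : x = u.root
      · exact ⟨0, hxr⟩
      · have h1 := hdec x hxr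
        obtain ⟨k, hk⟩ := ih (u.parent x) (by omega)
        exact ⟨k + 1, by rw [Function.iterate_succ_apply]; exact hk⟩
  exact key (dep s hs x) x le_rfl

theorem merge_parent_inl (t : PreTree V) (s : PreTree W) (v : V) :
    (t.merge s).parent (Sum.inl v) = Sum.inl (t.parent v) := rfl

theorem merge_parent_inr_root (t : PreTree V) (s : PreTree W) :
    (t.merge s).parent (Sum.inr s.root) = Sum.inl t.root := by simp [merge]

theorem merge_parent_inr (t : PreTree V) (s : PreTree W) {w : W} (hw : w ≠ s.root) :
    (t.merge s).parent (Sum.inr w) = Sum.inr (s.parent w) := by simp [merge, hw]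

theorem merge_iterate_inl (t : PreTree V) (s : PreTree W) (k : ℕ) (v : V) :
    (t.merge s).parent^[k] (Sum.inl v) = Sum.inl (t.parent^[k] v) := by
  induction k generalizing v with
  | zero => rfl
  | succ n ih =>
    rw [Function.iterate_succ_apply, Function.iterate_succ_apply, merge_parent_inl, ih]

theorem anc_merge_inl {t : PreTree V} {s : PreTree W} {u v : V} (h : t.Anc u v) :
    (t.merge s).Anc (Sum.inl u) (Sum.inl v) := by
  obtain ⟨k, hk⟩ := h
  exact ⟨k, by rw [merge_iterate_inl, hk]⟩

theorem anc_merge_inr {t : PreTree V} {s : PreTree W} (hstree : s.IsTree) {u w : W}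
    (h : s.Anc u w) : (t.merge s).Anc (Sum.inr u) (Sum.inr w) := by
  have hex : ∃ k, s.parent^[k] w = u := h
  have hk : s.parent^[Nat.find hex] w = u := Nat.find_spec hex
  set k := Nat.find hex with hkdef
  have havoid : ∀ j < k, s.parent^[j] w ≠ s.root := by
    intro j hj hjr
    by_cases hu : u = s.root
    · exact (Nat.find_min hex hj) (hjr.trans hu.symm)
    · apply hu
      have hcomp : s.parent^[k] w = s.parent^[k - j] (s.parent^[j] w) := by
        rw [← Function.iterate_add_apply]; congr 1; omega
      rw [← hk, hcomp, hjr, iterate_root hstree]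
  have hchain : ∀ j ≤ k, (t.merge s).parent^[j] (Sum.inr w) = Sum.inr (s.parent^[j] w) := by
    intro j hj
    induction j with
    | zero => rfl
    | succ n ih =>
      rw [Function.iterate_succ_apply', ih (by omega), Function.iterate_succ_apply']
      exact merge_parent_inr t s (havoid n (by omega))
  exact ⟨k, by rw [hchain k le_rfl, hk]⟩

theorem merge_isRanked {t : PreTree V} {s : PreTree W} (ht : t.IsRanked) (hs : s.IsRanked)
    (hr : s.rank s.root ≤ t.rank t.root) : (t.merge s).IsRanked := by
  constructor
  · constructor
    · show (t.merge s).parent (Sum.inl t.root) = Sum.inl t.root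
      rw [merge_parent_inl, ht.1.1]
    · rintro (v | w)
      · exact anc_merge_inl (ht.1.2 v)
      · refine Anc.trans' ?_ (anc_merge_inr hs.1 (hs.1.2 w))
        exact ⟨1, merge_parent_inr_root t s⟩
  · rintro (v | w) hz
    · have hv : v ≠ t.root := fun h => hz (by rw [h]; rfl)
      show (t.merge s).rank ((t.merge s).parent (Sum.inl v)) > (t.merge s).rank (Sum.inl v)
      rw [merge_parent_inl]
      show (if t.parent v = t.root ∧ _ then t.rank (t.parent v) + 1 else t.rank (t.parent v)) >
        (if v = t.root ∧ _ then t.rank v + 1 else t.rank v)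
      have h1 := ht.2 v hv
      simp only [hv, false_and, if_false]
      split_ifs <;> omega
    · by_cases hw : w = s.root
      · subst hw
        show (t.merge s).rank ((t.merge s).parent (Sum.inr s.root)) > (t.merge s).rank (Sum.inr s.root)
        rw [merge_parent_inr_root]
        show (if t.root = t.root ∧ t.rank t.root = s.rank s.root then t.rank t.root + 1
          else t.rank t.root) > s.rank s.root
        split_ifs with h
        · omega
        · have : ¬ (t.rank t.root = s.rank s.root) := fun hh => h ⟨rfl, hh⟩
          omega
      · show (t.merge s).rank ((t.merge s).parent (Sum.inr w)) > (t.merge s).rank (Sum.inr w)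
        rw [merge_parent_inr t s hw]
        exact hs.2 w hw

theorem Iso.iterate {t : PreTree V} {s : PreTree W} (I : t.Iso s) (k : ℕ) (x : V) :
    s.parent^[k] (I.toEquiv x) = I.toEquiv (t.parent^[k] x) := by
  induction k generalizing x with
  | zero => rfl
  | succ n ih =>
    rw [Function.iterate_succ_apply, Function.iterate_succ_apply, ← I.map_parent, ih]

theorem Iso.anc {t : PreTree V} {s : PreTree W} (I : t.Iso s) {u v : V} (h : t.Anc u v) :
    s.Anc (I.toEquiv u) (I.toEquiv v) := by
  obtain ⟨k, hk⟩ := h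
  exact ⟨k, by rw [I.iterate, hk]⟩

theorem Iso.isRanked {t : PreTree V} {s : PreTree W} (I : t.Iso s) (ht : t.IsRanked) :
    s.IsRanked := by
  constructor
  · constructor
    · rw [← I.map_root, ← I.map_parent, ht.1.1]
    · intro x
      have h := I.anc (ht.1.2 (I.toEquiv.symm x))
      rwa [I.map_root, Equiv.apply_symm_apply] at h
  · intro x hx
    set x₀ := I.toEquiv.symm x with hx₀
    have hex : I.toEquiv x₀ = x := Equiv.apply_symm_apply _ _
    have hx₀r : x₀ ≠ t.root := by
      intro h; apply hx; rw [← hex, h, I.map_root]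
    have := ht.2 x₀ hx₀r
    calc s.rank x = t.rank x₀ := by rw [← hex, I.map_rank]
    _ < t.rank (t.parent x₀) := this
    _ = s.rank (I.toEquiv (t.parent x₀)) := (I.map_rank _).symm
    _ = s.rank (s.parent x) := by rw [I.map_parent, hex]

end PreTree

end AuxLemmas
section ClassLemmas

namespace PreTree

variable {V W : Type}

theorem collapse_isRanked {t : PreTree V} (ht : t.IsRanked) (x : V) :
    (t.collapse x).IsRanked := by
  have hparent : ∀ v : V, (t.collapse x).parent v = t.root ∨
      (t.collapse x).parent v = t.parent v := by
    intro v
    by_cases h : v ≠ t.root ∧ t.Anc v x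
    · left; show (if v ≠ t.root ∧ t.Anc v x then t.root else t.parent v) = t.root
      rw [if_pos h]
    · right; show (if v ≠ t.root ∧ t.Anc v x then t.root else t.parent v) = t.parent v
      rw [if_neg h]
  have hroot : (t.collapse x).root = t.root := rfl
  have hfix : (t.collapse x).parent (t.collapse x).root = (t.collapse x).root := by
    show (if t.root ≠ t.root ∧ _ then _ else t.parent t.root) = t.root
    simp [ht.1.1]
  constructor
  · refine isTree_of_dep_lt ht.1 hroot hfix ?_
    intro v hv
    have hv' : v ≠ t.root := hv
    have hd0 : dep t ht.1 v ≠ 0 := fun h => hv' ((dep_eq_zero_iff t ht.1 v).mp h)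
    rcases hparent v with h | h
    · rw [h]
      have : dep t ht.1 t.root = 0 := (dep_eq_zero_iff t ht.1 t.root).mpr rfl
      omega
    · rw [h]
      have := dep_parent t ht.1 hv'
      omega
  · intro v hv
    have hv' : v ≠ t.root := hv
    show (t.collapse x).rank ((t.collapse x).parent v) > (t.collapse x).rank v
    rcases hparent v with h | h
    · rw [h]
      show t.rank t.root > t.rank v
      exact rank_lt_of_anc' ht (ht.1.2 v) (fun hh => hv' hh.symm)
    · rw [h]
      exact ht.2 v hv'

end PreTree

theorem IsUnion.isRanked : ∀ {V : Type} {t : PreTree V}, IsUnion t → t.IsRanked := by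
  intro V t h
  induction h with
  | singleton t h1 h2 =>
    exact ⟨⟨h1 _, fun x => ⟨0, h1 x⟩⟩, fun x hx => absurd (h1 x) hx⟩
  | merge t s ht hs hr iht ihs => exact PreTree.merge_isRanked iht ihs hr
  | iso t s ht hi iht => exact (Classical.choice hi).isRanked iht

theorem IsUnionFind.isRanked : ∀ {V : Type} {t : PreTree V}, IsUnionFind t → t.IsRanked := by
  intro V t h
  induction h with
  | singleton t h1 h2 =>
    exact ⟨⟨h1 _, fun x => ⟨0, h1 x⟩⟩, fun x hx => absurd (h1 x) hx⟩
  | merge t s ht hs hr iht ihs => exact PreTree.merge_isRanked iht ihs hr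
  | collapse t x ht iht => exact PreTree.collapse_isRanked iht x
  | iso t s ht hi iht => exact (Classical.choice hi).isRanked iht

theorem IsUnion.finite : ∀ {V : Type} {t : PreTree V}, IsUnion t → Finite V := by
  intro V t h
  induction h with
  | singleton t h1 h2 =>
    exact @Finite.of_subsingleton _ ⟨fun a b => (h1 a).trans (h1 b).symm⟩
  | merge t s ht hs hr iht ihs =>
    have := iht; have := ihs
    infer_instance
  | iso t s ht hi iht =>
    have := iht
    exact Finite.of_equiv _ (Classical.choice hi).toEquiv

theorem IsUnionFind.finite : ∀ {V : Type} {t : PreTree V}, IsUnionFind t → Finite V := by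
  intro V t h
  induction h with
  | singleton t h1 h2 =>
    exact @Finite.of_subsingleton _ ⟨fun a b => (h1 a).trans (h1 b).symm⟩
  | merge t s ht hs hr iht ihs =>
    have := iht; have := ihs
    infer_instance
  | collapse t x ht iht => exact iht
  | iso t s ht hi iht =>
    have := iht
    exact Finite.of_equiv _ (Classical.choice hi).toEquiv

theorem IsUnion.isUnionFind : ∀ {V : Type} {t : PreTree V}, IsUnion t → IsUnionFind t := by
  intro V t h
  induction h with
  | singleton t h1 h2 => exact IsUnionFind.singleton t h1 h2
  | merge t s ht hs hr iht ihs => exact IsUnionFind.merge t s iht ihs hr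
  | iso t s ht hi iht => exact IsUnionFind.iso t s iht hi

end ClassLemmas
section PushesOfLe

namespace PreTree

variable {V : Type}

theorem le_of_parent_anc {t u : PreTree V} (h : ∀ v, u.Anc (t.parent v) v) : t.Le u := by
  intro x y hxy
  obtain ⟨k, hk⟩ := hxy
  subst hk
  induction k with
  | zero => exact Anc.rfl'
  | succ n ih =>
    rw [Function.iterate_succ_apply']
    exact Anc.trans' (h _) ih

theorem exists_push {V : Type} [Fintype V] {s d : PreTree V} (hstree : s.IsTree)
    (hsrank : s.RankDec) (hd : d.IsRanked) (hroot : d.root = s.root)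
    (hrank : d.rank = s.rank) (hle : d.Le s) {x : V}
    (hx : d.parent x ≠ s.parent x)
    (hmin : ∀ v, d.parent v ≠ s.parent v → dep s hstree x ≤ dep s hstree v) :
    ∃ d₂ : PreTree V, PushStep d d₂ ∧ d₂.IsRanked ∧ d₂.root = s.root ∧
      d₂.rank = s.rank ∧ d₂.Le s ∧
      (∑ v : V, (dep s hstree v - dep s hstree (d₂.parent v) - 1)) <
        (∑ v : V, (dep s hstree v - dep s hstree (d.parent v) - 1)) := by
  have hxroot : x ≠ d.root := by
    intro h
    apply hx
    rw [h, hd.1.1, hroot, hstree.1]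
  set p := d.parent x with hp
  have hancpx : s.Anc p x := hle _ _ (anc_parent' d x)
  have hpx : p ≠ x := by
    have h1 := hd.2 x hxroot
    intro h; rw [← hp, h] at h1; exact lt_irrefl _ h1
  have hex : ∃ m, s.parent^[m] x = p := hancpx
  have hm : s.parent^[Nat.find hex] x = p := Nat.find_spec hex
  set m := Nat.find hex with hmdef
  have hm0 : m ≠ 0 := by intro h; rw [h] at hm; exact hpx hm.symm
  obtain ⟨m', hm'⟩ := Nat.exists_eq_succ_of_ne_zero hm0
  set w := s.parent^[m'] x with hwdef
  have hpw : s.parent w = p := by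
    have h2 : s.parent^[m' + 1] x = p := by
      rw [← Nat.succ_eq_add_one, ← hm']; exact hm
    rw [Function.iterate_succ_apply'] at h2
    rw [hwdef]; exact h2
  have hwp : w ≠ p := by
    intro h
    have h2 : s.parent^[m'] x = p := by rw [← hwdef, h]
    exact absurd h2 (Nat.find_min hex (by omega))
  have hwx : w ≠ x := by
    intro h
    apply hx
    rw [← hpw, h]
  have hancwx : s.Anc w x := ⟨m', hwdef.symm⟩
  have hdepwx : dep s hstree w < dep s hstree x := dep_lt_of_anc' hstree hancwx hwx
  have hwnd : d.parent w = s.parent w := by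
    by_contra hcon
    have := hmin w hcon
    omega
  have hwroot : w ≠ s.root := by
    intro h
    exact hwp (by rw [h, ← hpw, h, hstree.1])
  have hrankxw : d.rank x < d.rank w := by
    rw [hrank]
    exact rank_lt_of_anc' ⟨hstree, hsrank⟩ hancwx hwx
  have hsib : d.Siblings x w :=
    ⟨fun h => hwx h.symm, hxroot, fun h => hwroot (h.trans hroot), by rw [hwnd, hpw, ← hp]⟩
  refine ⟨d.push x w, ⟨x, w, hsib, hrankxw, rfl⟩, ?_, hroot, hrank, ?_, ?_⟩
  · -- IsRanked
    have hstep : ∀ v, s.Anc ((d.push x w).parent v) v := by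
      intro v
      show s.Anc (Function.update d.parent x w v) v
      by_cases hv : v = x
      · subst hv; rw [Function.update_self]; exact hancwx
      · rw [Function.update_of_ne hv]; exact hle _ _ (anc_parent' d v)
    constructor
    · refine isTree_of_dep_lt hstree hroot ?_ ?_
      · show Function.update d.parent x w d.root = d.root
        rw [Function.update_of_ne (fun h => hxroot h.symm), hd.1.1]
      · intro v hv
        have hne : (d.push x w).parent v ≠ v := by
          show Function.update d.parent x w v ≠ v
          by_cases hvx : v = x
          · subst hvx; rw [Function.update_self]; exact hwx
          · rw [Function.update_of_ne hvx]
            have := hd.2 v hv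
            intro h; rw [h] at this; exact lt_irrefl _ this
        exact dep_lt_of_anc' hstree (hstep v) hne
    · intro v hv
      show d.rank (Function.update d.parent x w v) > d.rank v
      by_cases hvx : v = x
      · subst hvx; rw [Function.update_self]; exact hrankxw
      · rw [Function.update_of_ne hvx]; exact hd.2 v hv
  · -- Le
    apply le_of_parent_anc
    intro v
    show s.Anc (Function.update d.parent x w v) v
    by_cases hv : v = x
    · subst hv; rw [Function.update_self]; exact hancwx
    · rw [Function.update_of_ne hv]; exact hle _ _ (anc_parent' d v)
  · -- measure decreases
    have hdepw : dep s hstree w = dep s hstree p + 1 := by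
      rw [dep_parent s hstree hwroot, hpw]
    apply Finset.sum_lt_sum
    · intro v _
      show dep s hstree v - dep s hstree (Function.update d.parent x w v) - 1 ≤
        dep s hstree v - dep s hstree (d.parent v) - 1
      by_cases hv : v = x
      · rw [hv, Function.update_self, ← hp]
        omega
      · rw [Function.update_of_ne hv]
    · refine ⟨x, Finset.mem_univ x, ?_⟩
      show dep s hstree x - dep s hstree (Function.update d.parent x w x) - 1 <
        dep s hstree x - dep s hstree (d.parent x) - 1
      rw [Function.update_self, ← hp]
      omega

theorem pushes_of_le {V : Type} [Fintype V] {s : PreTree V} (hstree : s.IsTree)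
    (hsrank : s.RankDec) :
    ∀ (n : ℕ) (d : PreTree V), d.IsRanked → d.root = s.root → d.rank = s.rank → d.Le s →
      (∑ v : V, (dep s hstree v - dep s hstree (d.parent v) - 1)) ≤ n →
      Relation.ReflTransGen PushStep d s := by
  intro n
  induction n with
  | zero =>
    intro d hd hroot hrank hle hM
    by_cases hall : ∀ v, d.parent v = s.parent v
    · have hds : d = s := by
        cases d; cases s
        simp only [PreTree.mk.injEq]
        exact ⟨hroot, funext hall, hrank⟩
      rw [hds]
    · push_neg at hall
      obtain ⟨x₀, hx₀⟩ := hall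
      obtain ⟨x, hxmem, hxmin⟩ := Finset.exists_min_image
        (Finset.univ.filter (fun v => d.parent v ≠ s.parent v)) (dep s hstree)
        ⟨x₀, Finset.mem_filter.mpr ⟨Finset.mem_univ _, hx₀⟩⟩
      have hxdef : d.parent x ≠ s.parent x := (Finset.mem_filter.mp hxmem).2
      have hmin : ∀ v, d.parent v ≠ s.parent v → dep s hstree x ≤ dep s hstree v :=
        fun v hv => hxmin v (Finset.mem_filter.mpr ⟨Finset.mem_univ _, hv⟩)
      obtain ⟨d₂, _, _, _, _, _, hlt⟩ :=
        exists_push hstree hsrank hd hroot hrank hle hxdef hmin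
      omega
  | succ n ih =>
    intro d hd hroot hrank hle hM
    by_cases hall : ∀ v, d.parent v = s.parent v
    · have hds : d = s := by
        cases d; cases s
        simp only [PreTree.mk.injEq]
        exact ⟨hroot, funext hall, hrank⟩
      rw [hds]
    · push_neg at hall
      obtain ⟨x₀, hx₀⟩ := hall
      obtain ⟨x, hxmem, hxmin⟩ := Finset.exists_min_image
        (Finset.univ.filter (fun v => d.parent v ≠ s.parent v)) (dep s hstree)
        ⟨x₀, Finset.mem_filter.mpr ⟨Finset.mem_univ _, hx₀⟩⟩
      have hxdef : d.parent x ≠ s.parent x := (Finset.mem_filter.mp hxmem).2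
      have hmin : ∀ v, d.parent v ≠ s.parent v → dep s hstree x ≤ dep s hstree v :=
        fun v hv => hxmin v (Finset.mem_filter.mpr ⟨Finset.mem_univ _, hv⟩)
      obtain ⟨d₂, hstep, hd₂, hroot₂, hrank₂, hle₂, hlt⟩ :=
        exists_push hstree hsrank hd hroot hrank hle hxdef hmin
      exact Relation.ReflTransGen.head hstep
        (ih d₂ hd₂ hroot₂ hrank₂ hle₂ (by omega))

end PreTree

end PushesOfLe
section Unionize

theorem transport_iterate {V W : Type} (e : V ≃ W) (s₀ : PreTree V) (k : ℕ) (v : W) :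
    (PreTree.mk (e s₀.root) (fun v => e (s₀.parent (e.symm v)))
        (fun v => s₀.rank (e.symm v))).parent^[k] v
      = e (s₀.parent^[k] (e.symm v)) := by
  induction k generalizing v with
  | zero => simp
  | succ n ih =>
    rw [Function.iterate_succ_apply, ih, Function.iterate_succ_apply]
    congr 1
    congr 1
    show e.symm (e (s₀.parent (e.symm v))) = s₀.parent (e.symm v)
    rw [Equiv.symm_apply_apply]

theorem unionize : ∀ {V : Type} {t : PreTree V}, IsUnionFind t →
    ∃ s : PreTree V, IsUnion s ∧ s.root = t.root ∧ s.rank = t.rank ∧ t.Le s := by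
  intro V t h
  induction h with
  | singleton t h1 h2 =>
    exact ⟨t, IsUnion.singleton t h1 h2, rfl, rfl, fun _ _ h => h⟩
  | merge a b ha hb hr iha ihb =>
    obtain ⟨sa, hsa, hra, hka, hla⟩ := iha
    obtain ⟨sb, hsb, hrb, hkb, hlb⟩ := ihb
    refine ⟨sa.merge sb,
      IsUnion.merge sa sb hsa hsb (by rw [hkb, hrb, hka, hra]; exact hr), ?_, ?_, ?_⟩
    · show Sum.inl sa.root = Sum.inl a.root
      rw [hra]
    · funext z
      cases z with
      | inl v =>
        show (if v = sa.root ∧ sa.rank sa.root = sb.rank sb.root then sa.rank v + 1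
            else sa.rank v) =
          (if v = a.root ∧ a.rank a.root = b.rank b.root then a.rank v + 1 else a.rank v)
        rw [hra, hka, hkb, hrb]
      | inr w =>
        show sb.rank w = b.rank w
        rw [hkb]
    · apply PreTree.le_of_parent_anc
      rintro (v | w)
      · rw [PreTree.merge_parent_inl]
        exact PreTree.anc_merge_inl (hla _ _ (PreTree.anc_parent' a v))
      · by_cases hw : w = b.root
        · subst hw
          rw [PreTree.merge_parent_inr_root]
          refine ⟨1, ?_⟩
          show (sa.merge sb).parent (Sum.inr b.root) = Sum.inl a.root
          rw [← hrb, PreTree.merge_parent_inr_root, hra]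
        · rw [PreTree.merge_parent_inr a b hw]
          exact PreTree.anc_merge_inr hsb.isRanked.1 (hlb _ _ (PreTree.anc_parent' b w))
  | collapse c z hc ihc =>
    obtain ⟨s, hs, hr, hk, hl⟩ := ihc
    refine ⟨s, hs, hr, hk, ?_⟩
    apply PreTree.le_of_parent_anc
    intro v
    by_cases hcond : v ≠ c.root ∧ c.Anc v z
    · have hpv : (c.collapse z).parent v = c.root := by
        show (if v ≠ c.root ∧ c.Anc v z then c.root else c.parent v) = c.root
        rw [if_pos hcond]
      rw [hpv, ← hr]
      exact hs.isRanked.1.2 v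
    · have hpv : (c.collapse z).parent v = c.parent v := by
        show (if v ≠ c.root ∧ c.Anc v z then c.root else c.parent v) = c.parent v
        rw [if_neg hcond]
      rw [hpv]
      exact hl _ _ (PreTree.anc_parent' c v)
  | iso t₀ t ht₀ hi ih =>
    obtain ⟨s₀, hs₀, hr₀, hk₀, hl₀⟩ := ih
    have I := Classical.choice hi
    set e := I.toEquiv with he
    refine ⟨⟨e s₀.root, fun v => e (s₀.parent (e.symm v)), fun v => s₀.rank (e.symm v)⟩,
      ?_, ?_, ?_, ?_⟩
    · refine IsUnion.iso s₀ _ hs₀ ⟨⟨e, rfl, ?_, ?_⟩⟩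
      · intro x
        show e (s₀.parent x) = e (s₀.parent (e.symm (e x)))
        rw [Equiv.symm_apply_apply]
      · intro x
        show s₀.rank (e.symm (e x)) = s₀.rank x
        rw [Equiv.symm_apply_apply]
    · show e s₀.root = t.root
      rw [hr₀]
      exact I.map_root
    · funext v
      show s₀.rank (e.symm v) = t.rank v
      rw [hk₀, ← I.map_rank (e.symm v), Equiv.apply_symm_apply]
    · intro u v huv
      obtain ⟨k, hk⟩ := huv
      have h0 : t₀.Anc (e.symm u) (e.symm v) := by
        refine ⟨k, ?_⟩
        have hit := I.iterate k (e.symm v)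
        rw [Equiv.apply_symm_apply, hk] at hit
        rw [hit, ← he, Equiv.symm_apply_apply]
      obtain ⟨j, hj⟩ := hl₀ _ _ h0
      refine ⟨j, ?_⟩
      rw [transport_iterate e s₀ j v, hj, Equiv.apply_symm_apply]

end Unionize
section Unpush

namespace PreTree

theorem ext' {V : Type} {t s : PreTree V} (h1 : t.root = s.root)
    (h2 : ∀ v, t.parent v = s.parent v) (h3 : ∀ v, t.rank v = s.rank v) : t = s := by
  cases t; cases s
  simp only [PreTree.mk.injEq]
  exact ⟨h1, funext h2, funext h3⟩

/-- reattach the node `x` so that its new parent is `v`. -/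
noncomputable def reattach {V : Type} (t : PreTree V) (x v : V) : PreTree V :=
  ⟨t.root, Function.update t.parent x v, t.rank⟩

@[simp] theorem reattach_root {V : Type} (t : PreTree V) (x v : V) :
    (t.reattach x v).root = t.root := rfl

@[simp] theorem reattach_rank {V : Type} (t : PreTree V) (x v : V) :
    (t.reattach x v).rank = t.rank := rfl

@[simp] theorem reattach_parent_same {V : Type} (t : PreTree V) (x v : V) :
    (t.reattach x v).parent x = v := by
  show Function.update t.parent x v x = v
  rw [Function.update_self]

theorem reattach_parent_ne {V : Type} (t : PreTree V) (x v : V) {w : V} (hw : w ≠ x) :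
    (t.reattach x v).parent w = t.parent w := by
  show Function.update t.parent x v w = t.parent w
  rw [Function.update_of_ne hw]

theorem anc_reattach_iff {V : Type} {c : PreTree V} {x z : V} (hnx : ¬ c.Anc x z) (val : V) :
    ∀ w, (c.reattach x val).Anc w z ↔ c.Anc w z := by
  have hiter : ∀ k, (c.reattach x val).parent^[k] z = c.parent^[k] z := by
    intro k
    induction k with
    | zero => rfl
    | succ n ih =>
      rw [Function.iterate_succ_apply', Function.iterate_succ_apply', ih]
      have hne : c.parent^[n] z ≠ x := fun h => hnx ⟨n, h⟩
      exact reattach_parent_ne c x val hne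
  intro w
  constructor
  · rintro ⟨k, hk⟩; exact ⟨k, by rw [← hiter k]; exact hk⟩
  · rintro ⟨k, hk⟩; exact ⟨k, by rw [hiter k]; exact hk⟩

end PreTree

open PreTree in
theorem unpush_root {V : Type} {t : PreTree V} (h : IsUnionFind t) (x y : V)
    (hxy : x ≠ y) (hx : x ≠ t.root) (hy : y ≠ t.root) (hp : t.parent x = y)
    (hyr : t.parent y = t.root) :
    IsUnionFind (t.reattach x (t.parent y)) := by
  have htree : t.IsTree := h.isRanked.1
  have hanc : ∀ w, t.Anc w x ↔ (w = x ∨ w = y ∨ w = t.root) := by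
    intro w
    constructor
    · rintro ⟨k, hk⟩
      match k, hk with
      | 0, hk => exact Or.inl hk.symm
      | 1, hk => exact Or.inr (Or.inl (hk.symm.trans hp))
      | (k+2), hk =>
        right; right
        rw [← hk]
        have h2 : t.parent^[k+2] x = t.parent^[k] t.root := by
          rw [show k+2 = k+1+1 from rfl, Function.iterate_succ_apply,
            Function.iterate_succ_apply, hp, hyr]
        rw [h2, PreTree.iterate_root htree]
    · rintro (rfl | rfl | rfl)
      · exact ⟨0, rfl⟩
      · exact ⟨1, hp⟩
      · exact ⟨2, by
          rw [show (2:ℕ) = 1+1 from rfl, Function.iterate_succ_apply]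
          show t.parent^[1] (t.parent x) = t.root
          rw [hp]; exact hyr⟩
  have heq : t.reattach x (t.parent y) = t.collapse x := by
    refine PreTree.ext' rfl ?_ (fun _ => rfl)
    intro w
    have hcoll : (t.collapse x).parent w =
        (if w ≠ t.root ∧ t.Anc w x then t.root else t.parent w) := rfl
    by_cases hwx : w = x
    · subst hwx
      rw [reattach_parent_same, hcoll, if_pos ⟨hx, (hanc _).mpr (Or.inl rfl)⟩, hyr]
    · rw [reattach_parent_ne t x _ hwx, hcoll]
      by_cases hwy : w = y
      · subst hwy
        rw [if_pos ⟨hy, (hanc _).mpr (Or.inr (Or.inl rfl))⟩]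
        exact hyr
      · by_cases hwr : w = t.root
        · subst hwr
          rw [if_neg (fun h => h.1 rfl)]
        · rw [if_neg (fun hcon => by
            rcases (hanc w).mp hcon.2 with h' | h' | h'
            · exact hwx h'
            · exact hwy h'
            · exact hwr h')]
  rw [heq]
  exact IsUnionFind.collapse t x h

open PreTree in
theorem unpush : ∀ {V : Type} {t : PreTree V}, IsUnionFind t → ∀ x y : V, x ≠ y →
    x ≠ t.root → y ≠ t.root → t.parent x = y →
    IsUnionFind (t.reattach x (t.parent y)) := by
  intro V t h
  induction h with
  | singleton t h1 h2 =>
    intro x y _ hx _ _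
    exact absurd (h1 x) hx
  | merge a b ha hb hr iha ihb =>
    intro x y hxy hx hy hp
    by_cases hyr : (a.merge b).parent y = (a.merge b).root
    · exact unpush_root (IsUnionFind.merge a b ha hb hr) x y hxy hx hy hp hyr
    · rcases x with u | w
      · -- x = inl u
        have hyval : y = Sum.inl (a.parent u) := by
          rw [← hp, PreTree.merge_parent_inl]
        subst hyval
        have hu : u ≠ a.root := fun h => hx (by rw [h]; rfl)
        have hv : a.parent u ≠ a.root := fun h => hy (by rw [h]; rfl)
        have hune : u ≠ a.parent u := fun h => hxy (by rw [← h])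
        have ha' := iha u (a.parent u) hune hu hv rfl
        have heq : (a.merge b).reattach (Sum.inl u)
              ((a.merge b).parent (Sum.inl (a.parent u)))
            = (a.reattach u (a.parent (a.parent u))).merge b := by
          refine PreTree.ext' rfl ?_ (fun _ => rfl)
          rintro (u' | w')
          · by_cases huu : u' = u
            · subst huu
              rw [reattach_parent_same, PreTree.merge_parent_inl,
                PreTree.merge_parent_inl, reattach_parent_same]
            · rw [reattach_parent_ne _ _ _ (fun h => huu (Sum.inl_injective h)),
                PreTree.merge_parent_inl, PreTree.merge_parent_inl,
                reattach_parent_ne _ _ _ huu]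
          · rw [reattach_parent_ne _ _ _ (by simp)]
            by_cases hwr : w' = b.root
            · subst hwr
              rw [PreTree.merge_parent_inr_root]
              exact (PreTree.merge_parent_inr_root _ b).symm
            · rw [PreTree.merge_parent_inr a b hwr, PreTree.merge_parent_inr _ b hwr]
        rw [heq]
        exact IsUnionFind.merge _ b ha' hb hr
      · -- x = inr w
        have hwroot : w ≠ b.root := by
          intro hh
          subst hh
          exact hy (by rw [← hp, PreTree.merge_parent_inr_root]; rfl)
        have hyval : y = Sum.inr (b.parent w) := by
          rw [← hp, PreTree.merge_parent_inr a b hwroot]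
        subst hyval
        have hvroot : b.parent w ≠ b.root := by
          intro hh
          apply hyr
          show (a.merge b).parent (Sum.inr (b.parent w)) = _
          rw [hh, PreTree.merge_parent_inr_root]
          rfl
        have hwne : w ≠ b.parent w := fun h => hxy (by rw [← h])
        have hb' := ihb w (b.parent w) hwne hwroot hvroot rfl
        have heq : (a.merge b).reattach (Sum.inr w)
              ((a.merge b).parent (Sum.inr (b.parent w)))
            = a.merge (b.reattach w (b.parent (b.parent w))) := by
          refine PreTree.ext' rfl ?_ (fun _ => rfl)
          rintro (u' | w')
          · rw [reattach_parent_ne _ _ _ (by simp), PreTree.merge_parent_inl,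
              PreTree.merge_parent_inl]
          · by_cases hww : w' = w
            · subst hww
              rw [reattach_parent_same, PreTree.merge_parent_inr a b hvroot,
                PreTree.merge_parent_inr a _ (show w' ≠ (b.reattach w' (b.parent (b.parent w'))).root from hwroot),
                reattach_parent_same]
            · rw [reattach_parent_ne _ _ _ (fun h => hww (Sum.inr_injective h))]
              by_cases hwr : w' = b.root
              · subst hwr
                rw [PreTree.merge_parent_inr_root a b]
                exact (PreTree.merge_parent_inr_root a _).symm
              · rw [PreTree.merge_parent_inr a b hwr,
                  PreTree.merge_parent_inr a _ (show w' ≠ (b.reattach w (b.parent (b.parent w))).root from hwr),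
                  reattach_parent_ne _ _ _ hww]
        rw [heq]
        exact IsUnionFind.merge a _ ha hb' hr
  | collapse c z hc ihc =>
    intro x y hxy hx hy hp
    by_cases hyr : (c.collapse z).parent y = (c.collapse z).root
    · exact unpush_root (IsUnionFind.collapse c z hc) x y hxy hx hy hp hyr
    · have hcoll : ∀ w, (c.collapse z).parent w =
          (if w ≠ c.root ∧ c.Anc w z then c.root else c.parent w) := fun _ => rfl
      have hxnz : ¬ c.Anc x z := by
        intro hanc
        apply hy
        rw [← hp, hcoll, if_pos ⟨hx, hanc⟩]
        rfl
      have hpx : c.parent x = y := by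
        rw [← hp, hcoll, if_neg (fun h => hxnz h.2)]
      have hynz : ¬ c.Anc y z := by
        intro hanc
        apply hyr
        rw [hcoll, if_pos ⟨hy, hanc⟩]
        rfl
      have hpy : (c.collapse z).parent y = c.parent y := by
        rw [hcoll, if_neg (fun h => hynz h.2)]
      have hc' := ihc x y hxy hx hy hpx
      have hancc' : ∀ w, (c.reattach x (c.parent y)).Anc w z ↔ c.Anc w z :=
        anc_reattach_iff hxnz (c.parent y)
      have heq : (c.collapse z).reattach x ((c.collapse z).parent y)
          = (c.reattach x (c.parent y)).collapse z := by
        refine PreTree.ext' rfl ?_ (fun _ => rfl)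
        intro w
        have hcoll' : ((c.reattach x (c.parent y)).collapse z).parent w =
            (if w ≠ c.root ∧ (c.reattach x (c.parent y)).Anc w z then c.root
              else (c.reattach x (c.parent y)).parent w) := rfl
        rw [hcoll', hpy]
        by_cases hwx : w = x
        · subst hwx
          rw [reattach_parent_same, if_neg (fun h => hxnz ((hancc' w).mp h.2))]
          exact (reattach_parent_same _ _ _).symm
        · rw [reattach_parent_ne _ _ _ hwx, hcoll]
          by_cases hcond : w ≠ c.root ∧ c.Anc w z
          · rw [if_pos hcond, if_pos ⟨hcond.1, (hancc' w).mpr hcond.2⟩]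
          · rw [if_neg hcond, if_neg (fun h => hcond ⟨h.1, (hancc' w).mp h.2⟩)]
            exact (reattach_parent_ne _ _ _ hwx).symm
      rw [heq]
      exact IsUnionFind.collapse _ z hc'
  | iso t₀ t ht₀ hi ih =>
    intro x y hxy hx hy hp
    have I := Classical.choice hi
    set e := I.toEquiv with he
    have hpx₀ : t₀.parent (e.symm x) = e.symm y := by
      apply e.injective
      calc e (t₀.parent (e.symm x)) = t.parent (e (e.symm x)) := I.map_parent _
        _ = t.parent x := by rw [Equiv.apply_symm_apply]
        _ = y := hp
        _ = e (e.symm y) := (Equiv.apply_symm_apply _ _).symm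
    have hx0 : e.symm x ≠ t₀.root := by
      intro hh
      apply hx
      rw [← Equiv.apply_symm_apply e x, hh, I.map_root]
    have hy0 : e.symm y ≠ t₀.root := by
      intro hh
      apply hy
      rw [← Equiv.apply_symm_apply e y, hh, I.map_root]
    have hxy0 : e.symm x ≠ e.symm y := fun hh =>
      hxy (by rw [← Equiv.apply_symm_apply e x, hh, Equiv.apply_symm_apply])
    have h0 := ih (e.symm x) (e.symm y) hxy0 hx0 hy0 hpx₀
    refine IsUnionFind.iso _ _ h0 ⟨⟨e, ?_, ?_, ?_⟩⟩
    · exact I.map_root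
    · intro w
      show e ((t₀.reattach (e.symm x) (t₀.parent (e.symm y))).parent w) =
        (t.reattach x (t.parent y)).parent (e w)
      by_cases hw : w = e.symm x
      · subst hw
        rw [reattach_parent_same, Equiv.apply_symm_apply, reattach_parent_same,
          I.map_parent, Equiv.apply_symm_apply]
      · have hew : e w ≠ x := fun hh => hw (by rw [← hh, Equiv.symm_apply_apply])
        rw [reattach_parent_ne _ _ _ hw, reattach_parent_ne _ _ _ hew]
        exact I.map_parent w
    · intro w
      exact I.map_rank w

end Unpush
/-- a ranked tree is a Union-Find tree iff some Union tree is
obtainable from it by a finite sequence of pushes. -/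
theorem isUnionFind_iff_pushes_to_union {V : Type} (t : PreTree V) (ht : t.IsRanked) :
    IsUnionFind t ↔
      ∃ s : PreTree V, Relation.ReflTransGen PreTree.PushStep t s ∧ IsUnion s := by
  constructor
  · intro h
    have hfin : Finite V := h.finite
    letI : Fintype V := Fintype.ofFinite V
    obtain ⟨s, hsU, hroot, hrank, hle⟩ := unionize h
    have hsr := hsU.isRanked
    refine ⟨s, ?_, hsU⟩
    exact PreTree.pushes_of_le hsr.1 hsr.2 _ t ht hroot.symm hrank.symm hle le_rfl
  · rintro ⟨s, hsteps, hsU⟩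
    have hsUF : IsUnionFind s := hsU.isUnionFind
    refine Relation.ReflTransGen.head_induction_on hsteps hsUF ?_
    intro a c hac hcs ih
    obtain ⟨x, y, ⟨hxy, hxr, hyr, hpar⟩, hrk, rfl⟩ := hac
    have hpx : (a.push x y).parent x = y := by
      show Function.update a.parent x y x = y
      rw [Function.update_self]
    have h1 := unpush ih x y hxy hxr hyr hpx
    have hpy : (a.push x y).parent y = a.parent y := by
      show Function.update a.parent x y y = a.parent y
      rw [Function.update_of_ne (fun h => hxy h.symm)]
    have heq : (a.push x y).reattach x ((a.push x y).parent y) = a := by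
      refine PreTree.ext' rfl ?_ (fun _ => rfl)
      intro w
      by_cases hw : w = x
      · subst hw
        rw [PreTree.reattach_parent_same, hpy]
        exact hpar.symm
      · rw [PreTree.reattach_parent_ne _ _ _ hw]
        show Function.update a.parent x y w = a.parent w
        rw [Function.update_of_ne hw]
    rw [heq] at h1
    exact h1
end

section
/- If t = collapse(t', x) for a ranked tree t' and a node x, then t ⊢* t', i.e., t' is obtainable from t by a sequence of push operations. -/
open scoped Classical

open PreTree

/-- a ranked tree is obtainable from its collapse at any node by a
finite sequence of pushes. -/
theorem collapse_pushes_back {V : Type} (t : PreTree V) (ht : t.IsRanked) (x : V) :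
    Relation.ReflTransGen PreTree.PushStep (t.collapse x) t := by
  classical
  obtain ⟨⟨hroot, hall⟩, hrank⟩ := ht
  set a : ℕ → V := fun k => t.parent^[k] x with ha
  have hex : ∃ k, a k = t.root := hall x
  set m := Nat.find hex with hm
  have hma : a m = t.root := Nat.find_spec hex
  have hlt : ∀ j < m, a j ≠ t.root := fun j hj => Nat.find_min hex hj
  have hsucc : ∀ k, a (k + 1) = t.parent (a k) := by
    intro k; simp [ha, Function.iterate_succ_apply']
  have hstab : ∀ k, m ≤ k → a k = t.root := by
    intro k hk
    induction k with
    | zero => exact le_antisymm hk (Nat.zero_le _) ▸ hma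
    | succ n ih =>
      rcases Nat.lt_or_ge m (n+1) with h | h
      · rw [hsucc, ih (by omega), hroot]
      · have : m = n + 1 := le_antisymm hk h
        rw [← this]; exact hma
  have hstep : ∀ k, k < m → t.rank (a k) < t.rank (a (k+1)) := by
    intro k hk
    have := hrank (a k) (hlt k hk)
    rwa [← hsucc] at this
  have hmono : ∀ i j, i < j → j ≤ m → t.rank (a i) < t.rank (a j) := by
    intro i j hij hjm
    induction j with
    | zero => omega
    | succ n ih =>
      rcases Nat.lt_succ_iff_lt_or_eq.mp hij with h | h
      · exact (ih h (by omega)).trans (hstep n (by omega))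
      · subst h; exact hstep i (by omega)
  -- intermediate trees
  set T : ℕ → PreTree V := fun i =>
    ⟨t.root, fun y => if ∃ k, i ≤ k ∧ k < m ∧ a k = y then t.root else t.parent y,
      t.rank⟩ with hT
  have hT0 : t.collapse x = T 0 := by
    simp only [hT, PreTree.collapse]
    congr 1
    funext y
    by_cases hy : ∃ k, 0 ≤ k ∧ k < m ∧ a k = y
    · obtain ⟨k, -, hk, rfl⟩ := hy
      rw [if_pos, if_pos]
      · exact ⟨k, Nat.zero_le _, (by omega : k < m), rfl⟩
      · exact ⟨hlt k hk, ⟨k, rfl⟩⟩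
    · rw [if_neg, if_neg hy]
      rintro ⟨hne, k, rfl⟩
      rcases Nat.lt_or_ge k m with h | h
      · exact hy ⟨k, Nat.zero_le _, h, rfl⟩
      · exact hne (hstab k h)
  have hTm : T m = t := by
    simp only [hT]
    cases t with
    | mk r p rk =>
      congr 1
      funext y
      rw [if_neg]
      rintro ⟨k, h1, h2, -⟩; omega
  have key : ∀ j i, i + j = m → Relation.ReflTransGen PreTree.PushStep (T i) t := by
    intro j
    induction j with
    | zero => intro i hi; rw [(by omega : i = m), hTm]
    | succ n ih =>
      intro i hi
      have him : i < m := by omega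
      by_cases hlast : i + 1 = m
      · -- T i = t already
        have : T i = t := by
          simp only [hT]
          cases t with
          | mk r p rk =>
            congr 1
            funext y
            by_cases hy : ∃ k, i ≤ k ∧ k < m ∧ a k = y
            · obtain ⟨k, h1, h2, rfl⟩ := hy
              have : k = i := by omega
              subst this
              rw [if_pos ⟨k, le_refl _, h2, rfl⟩]
              have := hsucc k
              rw [hlast] at this
              rw [hma] at this
              exact this
            · rw [if_neg hy]
        rw [this]
      · -- push a i below a (i+1)
        have hi1m : i + 1 < m := by omega
        have hpar_i : (T i).parent (a i) = t.root := by
          simp only [hT]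
          rw [if_pos ⟨i, le_refl _, him, rfl⟩]
        have hpar_i1 : (T i).parent (a (i+1)) = t.root := by
          simp only [hT]
          rw [if_pos ⟨i+1, by omega, hi1m, rfl⟩]
        have hne01 : a i ≠ a (i+1) := fun h => by
          have := hmono i (i+1) (by omega) (by omega); rw [h] at this; omega
        have hstep1 : PreTree.PushStep (T i) (T (i+1)) := by
          refine ⟨a i, a (i+1), ⟨hne01, ?_, ?_, ?_⟩, ?_, ?_⟩
          · show a i ≠ t.root
            exact hlt i him
          · show a (i+1) ≠ t.root
            exact hlt (i+1) hi1m
          · rw [hpar_i, hpar_i1]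
          · exact hmono i (i+1) (by omega) (by omega)
          · simp only [PreTree.push, hT]
            congr 1
            funext y
            by_cases hy : y = a i
            · subst hy
              rw [Function.update_self, if_neg]
              · rw [← hsucc]
              · rintro ⟨k, h1, h2, hk⟩
                have := hmono i k (by omega) (by omega)
                rw [hk] at this; omega
            · rw [Function.update_of_ne hy]
              apply if_congr _ rfl rfl
              constructor
              · rintro ⟨k, h1, h2, rfl⟩
                exact ⟨k, by omega, h2, rfl⟩
              · rintro ⟨k, h1, h2, rfl⟩
                have hk : i + 1 ≤ k := by
                  rcases Nat.lt_or_ge k (i+1) with h | h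
                  · exfalso
                    have : k = i := by omega
                    subst this
                    exact hy rfl
                  · exact h
                exact ⟨k, hk, h2, rfl⟩
        exact Relation.ReflTransGen.head hstep1 (ih (i+1) (by omega))
  rw [hT0]
  exact key m 0 (by omega)
end

section
/- An apple of weight a (a ranked tree with a root of rank 2, one depth-one child of rank 0, and a depth-one children of rank 1, where a ≥ 1) is not a Union-Find tree. -/
open scoped Classical

open PreTree

/-- An apple of weight `a`: a root of rank 2 (node `0`), one depth-one child of
rank 0 (node `1`) and `a` depth-one children of rank 1. -/
noncomputable def appleTree (a : ℕ) : PreTree (Fin (a + 2)) where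
  root := 0
  parent := fun _ => 0
  rank := fun i => if i = 0 then 2 else if i = 1 then 0 else 1

section Aux

open PreTree

/-- Split off a distinguished element satisfying `p` from a subtype count. -/
noncomputable def splitEquiv {V : Type} (p : V → Prop) (a : V) (hpa : p a) :
    {v : V // p v} ≃ ({v : V // p v ∧ v ≠ a} ⊕ Unit) where
  toFun v := if h : (v : V) = a then Sum.inr () else Sum.inl ⟨v, v.2, h⟩
  invFun o := match o with
    | Sum.inl w => ⟨w.1, w.2.1⟩
    | Sum.inr _ => ⟨a, hpa⟩
  left_inv := by
    rintro ⟨v, hv⟩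
    by_cases h : v = a
    · subst h; simp
    · simp [h]
  right_inv := by
    rintro (⟨w, hw, hne⟩ | ⟨⟩)
    · simp [hne]
    · simp

lemma cnt_split {V : Type} [Finite V] (p : V → Prop) (a : V) (hpa : p a) :
    Nat.card {v : V // p v} = Nat.card {v : V // p v ∧ v ≠ a} + 1 := by
  rw [Nat.card_congr (splitEquiv p a hpa), Nat.card_sum]
  simp

lemma cnt_congr {V : Type} {p q : V → Prop} (h : ∀ v, p v ↔ q v) :
    Nat.card {v : V // p v} = Nat.card {v : V // q v} :=
  Nat.card_congr (Equiv.subtypeEquivRight h)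

/-- The key invariant of Union-Find trees: nodes of rank 0 dominate. -/
lemma isUnionFind_inv : ∀ {V : Type} {t : PreTree V}, IsUnionFind t →
    Finite V ∧ Nat.card {x : V // t.rank x ≠ 0} +
      (if t.rank t.root = 0 then 1 else 0) ≤ Nat.card {x : V // t.rank x = 0} := by
  intro V₀ t₀ h
  induction h with
  | @singleton V t h1 h2 =>
      have hsub : Subsingleton V := ⟨fun a b => (h1 a).trans (h1 b).symm⟩
      refine ⟨Finite.of_subsingleton, ?_⟩
      have he : IsEmpty {x : V // t.rank x ≠ 0} :=
        ⟨fun x => x.2 (by rw [h1 x.1, h2])⟩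
      have h1' : Nat.card {x : V // t.rank x ≠ 0} = 0 := Nat.card_of_isEmpty
      have hne : Nonempty {x : V // t.rank x = 0} := ⟨⟨t.root, h2⟩⟩
      have hss : Subsingleton {x : V // t.rank x = 0} :=
        ⟨fun a b => Subtype.ext (Subsingleton.elim _ _)⟩
      have h2' : Nat.card {x : V // t.rank x = 0} = 1 := Nat.card_unique
      rw [h1', h2', h2]
      simp
  | @merge V W t s ht hs hr iht ihs =>
      obtain ⟨ftV, ihtc⟩ := iht
      obtain ⟨ftW, ihsc⟩ := ihs
      refine ⟨inferInstance, ?_⟩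
      have ihtc' : Nat.card {x : V // ¬ t.rank x = 0} +
          (if t.rank t.root = 0 then 1 else 0) ≤ Nat.card {x : V // t.rank x = 0} := ihtc
      have ihsc' : Nat.card {x : W // ¬ s.rank x = 0} +
          (if s.rank s.root = 0 then 1 else 0) ≤ Nat.card {x : W // s.rank x = 0} := ihsc
      clear ihtc ihsc
      have hRl : ∀ v, (t.merge s).rank (Sum.inl v) =
          (if v = t.root ∧ t.rank t.root = s.rank s.root
            then t.rank v + 1 else t.rank v) := fun v => rfl
      have hRr : ∀ w, (t.merge s).rank (Sum.inr w) = s.rank w := fun w => rfl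
      have hroot : (t.merge s).root = Sum.inl t.root := rfl
      have hsplit : ∀ (p : ℕ → Prop),
          Nat.card {z // p ((t.merge s).rank z)} =
            Nat.card {v // p ((t.merge s).rank (Sum.inl v))} +
              Nat.card {w // p ((t.merge s).rank (Sum.inr w))} := by
        intro p
        rw [Nat.card_congr (Equiv.subtypeSum (p := fun z => p ((t.merge s).rank z))),
          Nat.card_sum]
      have hroot0 : ¬ (t.merge s).rank (Sum.inl t.root) = 0 := by
        rw [hRl]
        by_cases hinc : t.rank t.root = s.rank s.root
        · simp [hinc]
        · simp [hinc]
          omega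
      rw [hroot, if_neg hroot0, hsplit (fun n => ¬ n = 0), hsplit (fun n => n = 0)]
      have esA : Nat.card {w // ¬ (t.merge s).rank (Sum.inr w) = 0}
          = Nat.card {w : W // ¬ s.rank w = 0} := cnt_congr fun w => by rw [hRr]
      have esB : Nat.card {w // (t.merge s).rank (Sum.inr w) = 0}
          = Nat.card {w : W // s.rank w = 0} := cnt_congr fun w => by rw [hRr]
      rw [esA, esB]
      by_cases hinc : t.rank t.root = s.rank s.root
      · by_cases h0 : t.rank t.root = 0
        · -- incrementing merge of two rank-0 roots
          have step1 : Nat.card {v : V // ¬ (t.merge s).rank (Sum.inl v) = 0}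
              = Nat.card {v : V // ¬ (t.merge s).rank (Sum.inl v) = 0 ∧ v ≠ t.root} + 1 :=
            cnt_split (fun v => ¬ (t.merge s).rank (Sum.inl v) = 0) t.root hroot0
          have step2 : Nat.card {v : V // ¬ (t.merge s).rank (Sum.inl v) = 0 ∧ v ≠ t.root}
              = Nat.card {v : V // ¬ t.rank v = 0} := by
            apply cnt_congr
            intro v
            rw [hRl]
            constructor
            · rintro ⟨hv, hne⟩
              simpa [hne] using hv
            · intro hv
              have hne : v ≠ t.root := fun h => hv (h ▸ h0)
              exact ⟨by simpa [hne] using hv, hne⟩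
          have eA : Nat.card {v : V // ¬ (t.merge s).rank (Sum.inl v) = 0}
              = Nat.card {v : V // ¬ t.rank v = 0} + 1 := by rw [step1, step2]
          have step3 : Nat.card {v : V // t.rank v = 0}
              = Nat.card {v : V // t.rank v = 0 ∧ v ≠ t.root} + 1 :=
            cnt_split (fun v => t.rank v = 0) t.root h0
          have step4 : Nat.card {v : V // t.rank v = 0 ∧ v ≠ t.root}
              = Nat.card {v : V // (t.merge s).rank (Sum.inl v) = 0} := by
            apply cnt_congr
            intro v
            rw [hRl]
            constructor
            · rintro ⟨hv, hne⟩
              simpa [hne] using hv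
            · intro hv
              have hne : v ≠ t.root := by
                intro h; subst h; simp [hinc] at hv
              exact ⟨by simpa [hne] using hv, hne⟩
          have eB : Nat.card {v : V // t.rank v = 0}
              = Nat.card {v : V // (t.merge s).rank (Sum.inl v) = 0} + 1 := by
            rw [step3, step4]
          have hs0 : s.rank s.root = 0 := hinc ▸ h0
          rw [if_pos h0] at ihtc'
          rw [if_pos hs0] at ihsc'
          omega
        · -- incrementing merge, root rank ≥ 1
          have hs0 : ¬ s.rank s.root = 0 := by rw [← hinc]; exact h0
          have eA : Nat.card {v : V // ¬ (t.merge s).rank (Sum.inl v) = 0}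
              = Nat.card {v : V // ¬ t.rank v = 0} := by
            apply cnt_congr; intro v; rw [hRl]
            by_cases hv : v = t.root
            · subst hv; simp [hinc, h0, hs0]
            · simp [hv]
          have eB : Nat.card {v : V // (t.merge s).rank (Sum.inl v) = 0}
              = Nat.card {v : V // t.rank v = 0} := by
            apply cnt_congr; intro v; rw [hRl]
            by_cases hv : v = t.root
            · subst hv; simp [hinc, h0, hs0]
            · simp [hv]
          rw [if_neg h0] at ihtc'
          rw [if_neg hs0] at ihsc'
          omega
      · -- non-incrementing merge
        have h0 : ¬ t.rank t.root = 0 := by omega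
        have eA : Nat.card {v : V // ¬ (t.merge s).rank (Sum.inl v) = 0}
            = Nat.card {v : V // ¬ t.rank v = 0} := by
          apply cnt_congr; intro v; rw [hRl]; simp [hinc]
        have eB : Nat.card {v : V // (t.merge s).rank (Sum.inl v) = 0}
            = Nat.card {v : V // t.rank v = 0} := by
          apply cnt_congr; intro v; rw [hRl]; simp [hinc]
        rw [if_neg h0] at ihtc'
        omega
  | collapse t x ht ih =>
      exact ih
  | @iso V W t s ht hi ih =>
      obtain ⟨ft, ihc⟩ := ih
      obtain ⟨e⟩ := hi
      refine ⟨Finite.of_equiv _ e.toEquiv, ?_⟩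
      have e1 : ∀ (p : ℕ → Prop),
          Nat.card {x : V // p (t.rank x)} = Nat.card {y : W // p (s.rank y)} :=
        fun p =>
          Nat.card_congr (Equiv.subtypeEquiv e.toEquiv (fun x => by rw [e.map_rank]))
      have hroot : s.rank s.root = t.rank t.root := by
        rw [← e.map_root, e.map_rank]
      rw [← e1 (fun n => ¬ n = 0), ← e1 (fun n => n = 0), hroot]
      exact ihc

end Aux


/-- an apple of weight `a ≥ 1` is not a Union-Find tree. -/
theorem apple_not_isUnionFind (a : ℕ) (ha : 1 ≤ a) : ¬ IsUnionFind (appleTree a) := by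
  intro h
  obtain ⟨_, hc⟩ := isUnionFind_inv h
  have hroot : (appleTree a).rank (appleTree a).root = 2 := by
    simp [appleTree]
  have h1ne0 : (1 : Fin (a + 2)) ≠ 0 := by
    have h2 : (1 : ℕ) < a + 2 := by omega
    simp [Fin.ext_iff, Fin.val_one, Nat.mod_eq_of_lt h2]
  have hrank : ∀ i : Fin (a + 2), (appleTree a).rank i = 0 ↔ i = 1 := by
    intro i
    by_cases h0 : i = 0
    · subst h0; simp [appleTree, h1ne0.symm]
    · by_cases h1 : i = 1
      · subst h1; simp [appleTree, h1ne0]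
      · simp [appleTree, h0, h1]
  have c0 : Nat.card {i : Fin (a + 2) // (appleTree a).rank i = 0} = 1 := by
    rw [cnt_congr hrank, Nat.card_eq_one_iff_exists]
    exact ⟨⟨1, rfl⟩, fun y => Subtype.ext y.2⟩
  have c1 : Nat.card {i : Fin (a + 2) // (appleTree a).rank i ≠ 0} = a + 1 := by
    have hiff : ∀ i : Fin (a+2), (appleTree a).rank i ≠ 0 ↔ ¬ (i = 1) := by
      intro i; rw [not_iff_not]; exact hrank i
    rw [cnt_congr hiff, Nat.card_eq_fintype_card, Fintype.card_subtype_compl]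
    have hone : Fintype.card {i : Fin (a+2) // i = 1} = 1 := by
      rw [Fintype.card_eq_one_iff]
      exact ⟨⟨1, rfl⟩, fun y => Subtype.ext y.2⟩
    rw [hone]
    simp
  rw [c0, c1, hroot] at hc
  simp at hc
  omega
end

section
/- If t = merge(t_1, t_2) where t_1, t_2 are ranked trees with rank(t_1) ≥ rank(t_2), and t_1 ⊢* s_1, t_2 ⊢* s_2 for trees s_1, s_2 on the respective node sets, then t ⊢* merge(s_1, s_2). -/
open scoped Classical

open PreTree

lemma pushStep_merge_left {V W : Type} {a b : PreTree V} (c : PreTree W)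
    (h : PreTree.PushStep a b) : PreTree.PushStep (a.merge c) (b.merge c) := by
  obtain ⟨x, y, ⟨hxy, hxr, hyr, hp⟩, hrk, rfl⟩ := h
  refine ⟨Sum.inl x, Sum.inl y, ⟨?_, ?_, ?_, ?_⟩, ?_, ?_⟩
  · simpa using hxy
  · simpa [PreTree.merge] using hxr
  · simpa [PreTree.merge] using hyr
  · simp [PreTree.merge, hp]
  · simp only [PreTree.merge]
    rw [if_neg (by simp [hxr])]
    split
    · exact hrk.trans_le (Nat.le_succ _)
    · exact hrk
  · show _ = PreTree.push _ _ _
    simp only [PreTree.merge, PreTree.push]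
    congr 1
    funext z
    cases z with
    | inl v =>
      by_cases hv : v = x <;> simp [Function.update, hv]
    | inr w =>
      have : (Sum.inr w : V ⊕ W) ≠ Sum.inl x := by simp
      simp [Function.update_of_ne this]

lemma pushStep_merge_right {V W : Type} (c : PreTree V) {a b : PreTree W}
    (h : PreTree.PushStep a b) : PreTree.PushStep (c.merge a) (c.merge b) := by
  obtain ⟨x, y, ⟨hxy, hxr, hyr, hp⟩, hrk, rfl⟩ := h
  refine ⟨Sum.inr x, Sum.inr y, ⟨?_, ?_, ?_, ?_⟩, ?_, ?_⟩
  · simpa using hxy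
  · simp [PreTree.merge]
  · simp [PreTree.merge]
  · simp [PreTree.merge, hxr, hyr, hp]
  · simpa [PreTree.merge] using hrk
  · show _ = PreTree.push _ _ _
    simp only [PreTree.merge, PreTree.push]
    congr 1
    funext z
    cases z with
    | inl v =>
      have : (Sum.inl v : V ⊕ W) ≠ Sum.inr x := by simp
      simp [Function.update_of_ne this]
    | inr w =>
      by_cases hw : w = x
      · subst hw; simp [Function.update, hxr]
      · simp [Function.update, hw]

/-- pushes performed in the two merged trees can be performed in the
merge: if `t₁ ⊢* s₁` and `t₂ ⊢* s₂` then `merge t₁ t₂ ⊢* merge s₁ s₂`. -/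
theorem merge_pushes {V W : Type} (t₁ s₁ : PreTree V) (t₂ s₂ : PreTree W)
    (h1 : t₁.IsRanked) (h2 : t₂.IsRanked) (hr : t₂.rank t₂.root ≤ t₁.rank t₁.root)
    (p1 : Relation.ReflTransGen PreTree.PushStep t₁ s₁)
    (p2 : Relation.ReflTransGen PreTree.PushStep t₂ s₂) :
    Relation.ReflTransGen PreTree.PushStep (t₁.merge t₂) (s₁.merge s₂) := by
  have q1 : Relation.ReflTransGen PreTree.PushStep (t₁.merge t₂) (s₁.merge t₂) :=
    Relation.ReflTransGen.lift (r := PreTree.PushStep) (fun s : PreTree V => s.merge t₂)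
      (by intro _ _ h; exact pushStep_merge_left t₂ h) _ _ p1
  have q2 : Relation.ReflTransGen PreTree.PushStep (s₁.merge t₂) (s₁.merge s₂) :=
    Relation.ReflTransGen.lift (r := PreTree.PushStep) (fun s : PreTree W => s₁.merge s)
      (by intro _ _ h; exact pushStep_merge_right s₁ h) _ _ p2
  exact q1.trans q2
end
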